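/- arXiv:1412.1540 — 3 statements merged into one kernel-verified Lean document; each statement's English description precedes it below -/
import Mathlib

section
/- Let A be the n × n real matrix with A_{i,i−1} = 1 for 2 ≤ i ≤ n, A_{1,n} = −1, and all other entries 0. Then there exist (ñ+1)/2 linear subspaces E₁, …, E_{(ñ+1)/2} of ℝⁿ, each invariant under A, with dim E_k = 2 for k = 1, …, (ñ−1)/2 and dim E_{(ñ+1)/2} = 2 if n is even, 1 if n is odd, such that every nonzero ξ ∈ E_k lies in 𝒩 with N(ξ) = 2k − 1, and moreover, for all 1 ≤ i ≤ j ≤ (ñ+1)/2 and every nonzero vector ξ in W_{i,j} = E_i ⊕ ⋯ ⊕ E_j, one has 2i − 1 ≤ N_m(ξ) ≤ N_M(ξ) ≤ 2j − 1. -/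
open Filter Topology

/-- δ₁ = −1 (index `0` in our 0-based indexing), δᵢ = 1 for the other indices. -/
def cyclicDelta (n : ℕ) [NeZero n] (i : Fin n) : ℝ := if i = 0 then -1 else 1

/-- The set Λ of vectors with all coordinates nonzero. -/
def cyclicLambda (n : ℕ) [NeZero n] : Set (Fin n → ℝ) := {x | ∀ i, x i ≠ 0}

/-- The integer valued Lyapunov function `N(x) = card {i : δᵢ xᵢ x_{i−1} < 0}`
(cyclic indices, `x₀ = xₙ`). -/
noncomputable def cyclicN (n : ℕ) [NeZero n] (x : Fin n → ℝ) : ℕ :=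
  Nat.card {i : Fin n // cyclicDelta n i * x i * x (i - 1) < 0}

/-- `N_m(x)`: the minimum of `N` over `U ∩ Λ` for all sufficiently small
neighborhoods `U` of `x`, i.e. the least value of `N` attained in every
neighborhood of `x` within `Λ`. -/
noncomputable def cyclicNm (n : ℕ) [NeZero n] (x : Fin n → ℝ) : ℕ :=
  sInf {k | ∃ᶠ y in 𝓝[cyclicLambda n] x, cyclicN n y = k}

/-- `N_M(x)`: the maximum of `N` over `U ∩ Λ` for all sufficiently small
neighborhoods `U` of `x`. -/
noncomputable def cyclicNM (n : ℕ) [NeZero n] (x : Fin n → ℝ) : ℕ :=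
  sSup {k | ∃ᶠ y in 𝓝[cyclicLambda n] x, cyclicN n y = k}

/-- The set 𝒩 on which `N` extends continuously. -/
def cyclicGood (n : ℕ) [NeZero n] : Set (Fin n → ℝ) :=
  {x | cyclicNm n x = cyclicNM n x}

/-- ñ = n if n is odd, n − 1 if n is even. -/
def ntilde (n : ℕ) : ℕ := if n % 2 = 1 then n else n - 1

/-- A linear cyclic negative feedback system: coefficients `diag t i = a_{ii}(t)`
and `sub t i = a_{i,i−1}(t)` (cyclically, `sub t 0 = a_{1,n}(t)`), all continuous,
with `a_{1,n}(t) < 0` and `a_{i,i−1}(t) > 0` for `i ≠ 1`. -/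
structure LinCNF (n : ℕ) [NeZero n] where
  diag : ℝ → Fin n → ℝ
  sub : ℝ → Fin n → ℝ
  cont_diag : ∀ i, Continuous fun t => diag t i
  cont_sub : ∀ i, Continuous fun t => sub t i
  sub_neg : ∀ t, sub t 0 < 0
  sub_pos : ∀ t (i : Fin n), i ≠ 0 → 0 < sub t i

/-- `x` is a solution of the linear system `ẋᵢ = a_{ii}(t)xᵢ + a_{i,i−1}(t)x_{i−1}`. -/
def LinCNF.IsSolution {n : ℕ} [NeZero n] (S : LinCNF n) (x : ℝ → Fin n → ℝ) : Prop :=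
  ∀ (t : ℝ) (i : Fin n),
    HasDerivAt (fun s => x s i) (S.diag t i * x t i + S.sub t i * x t (i - 1)) t

/-- `Φ` is the fundamental (matrix) solution, `Φ(0) = I`. -/
def LinCNF.IsFundamental {n : ℕ} [NeZero n] (S : LinCNF n)
    (Φ : ℝ → (Fin n → ℝ) →ₗ[ℝ] (Fin n → ℝ)) : Prop :=
  Φ 0 = LinearMap.id ∧ ∀ x₀ : Fin n → ℝ, S.IsSolution fun t => Φ t x₀

/-- The cone `K_h = {0} ∪ {x : N_M(x) ≤ 2h − 1}`. -/
def Kcone (n : ℕ) [NeZero n] (h : ℕ) : Set (Fin n → ℝ) :=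
  {0} ∪ {x | cyclicNM n x ≤ 2 * h - 1}

/-- The complementary cone `K^h = {0} ∪ {x : N_m(x) > 2h − 1}`. -/
def KconeUp (n : ℕ) [NeZero n] (h : ℕ) : Set (Fin n → ℝ) :=
  {0} ∪ {x | 2 * h - 1 < cyclicNm n x}

/-- The matrix with `A_{i,i−1} = 1` for `2 ≤ i ≤ n`, `A_{1,n} = −1`
(cyclically, the entry in row `i`, column `i − 1` is `δᵢ`) and all other
entries `0`. -/
def Amat (n : ℕ) [NeZero n] : Matrix (Fin n) (Fin n) ℝ :=
  fun i j => if j = i - 1 then cyclicDelta n i else 0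



open Filter Topology Complex
open scoped Fin.CommRing

namespace Stmt11Aux

noncomputable def om (n : ℕ) : ℂ := Complex.exp (Real.pi * Complex.I / n)
noncomputable def om4 (n : ℕ) : ℂ := Complex.exp (Real.pi * Complex.I / (2 * n))

lemma om_ne_zero (n : ℕ) : om n ≠ 0 := Complex.exp_ne_zero _
lemma om4_ne_zero (n : ℕ) : om4 n ≠ 0 := Complex.exp_ne_zero _

lemma om_zpow (n : ℕ) (m : ℤ) : om n ^ m = Complex.exp (m * (Real.pi * Complex.I / n)) :=
  (Complex.exp_int_mul _ m).symm

lemma om4_zpow (n : ℕ) (m : ℤ) : om4 n ^ m = Complex.exp (m * (Real.pi * Complex.I / (2 * n))) :=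
  (Complex.exp_int_mul _ m).symm

lemma om4_sq (n : ℕ) (hn : 0 < n) : om4 n ^ (2 : ℤ) = om n := by
  rw [om4_zpow, om]
  congr 1
  have : (n : ℂ) ≠ 0 := Nat.cast_ne_zero.2 hn.ne'
  field_simp
  ring

lemma om_pow_n (n : ℕ) (hn : 0 < n) : om n ^ (n : ℤ) = -1 := by
  rw [om_zpow]
  have : (n : ℂ) ≠ 0 := Nat.cast_ne_zero.2 hn.ne'
  rw [show ((n : ℤ) : ℂ) * (Real.pi * Complex.I / n) = Real.pi * Complex.I by
    push_cast; field_simp]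
  exact Complex.exp_pi_mul_I

lemma om_eq_one_iff (n : ℕ) (hn : 0 < n) (s : ℤ) : om n ^ s = 1 ↔ (2 * (n:ℤ)) ∣ s := by
  rw [om_zpow, Complex.exp_eq_one_iff]
  have hne : (n : ℂ) ≠ 0 := Nat.cast_ne_zero.2 hn.ne'
  have hπ : (Real.pi : ℂ) ≠ 0 := by
    exact_mod_cast Complex.ofReal_ne_zero.2 Real.pi_ne_zero
  constructor
  · rintro ⟨k, hk⟩
    refine ⟨k, ?_⟩
    have h2 : (s : ℂ) = 2 * n * k := by
      field_simp at hk
      have h3 : (s:ℂ) * (Real.pi * I) = (2 * n * k) * (Real.pi * I) := by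
        rw [hk]; ring
      exact mul_right_cancel₀ (mul_ne_zero hπ Complex.I_ne_zero) h3
    exact_mod_cast h2
  · rintro ⟨k, hk⟩
    refine ⟨k, ?_⟩
    subst hk
    push_cast
    field_simp

lemma om_geom_sum (n : ℕ) (hn : 0 < n) (s : ℤ) (hs : ¬ (2 * (n:ℤ)) ∣ s) :
    ∑ t ∈ Finset.range (2 * n), om n ^ (s * t) = 0 := by
  have h1 : ∀ t : ℕ, om n ^ (s * (t:ℤ)) = (om n ^ s) ^ t := by
    intro t
    rw [zpow_mul, zpow_natCast]
  simp only [h1]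
  have hx : om n ^ s ≠ 1 := fun h => hs ((om_eq_one_iff n hn s).1 h)
  rw [geom_sum_eq hx]
  have : (om n ^ s) ^ (2 * n) = 1 := by
    rw [← zpow_natCast, ← zpow_mul]
    rw [show s * ((2 * n : ℕ) : ℤ) = (2 * (n:ℤ)) * s by push_cast; ring]
    rw [zpow_mul, (om_eq_one_iff n hn (2 * (n:ℤ))).2 ⟨1, (mul_one _).symm⟩, one_zpow]
  rw [this, sub_self, zero_div]

/-- The anti-periodic lift of a vector `x : Fin n → ℝ` to `ℤ`. -/
noncomputable def Lint (n : ℕ) [NeZero n] (x : Fin n → ℝ) (t : ℤ) : ℝ :=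
  (-1 : ℝ) ^ (t / (n:ℤ)) * x (t : Fin n)

lemma Lint_add_n (n : ℕ) [NeZero n] (x : Fin n → ℝ) (t : ℤ) :
    Lint n x (t + n) = - Lint n x t := by
  have hn : 0 < (n:ℤ) := by exact_mod_cast Nat.pos_of_ne_zero (NeZero.ne n)
  unfold Lint
  have h1 : (t + (n:ℤ)) / n = t / n + 1 := by
    rw [show t + (n:ℤ) = t + 1 * n by ring, Int.add_mul_ediv_right _ _ hn.ne']
  have h2 : ((t + (n:ℤ) : ℤ) : Fin n) = (t : Fin n) := by
    push_cast
    simp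
  rw [h1, h2, zpow_add₀ (by norm_num : (-1:ℝ) ≠ 0), zpow_one]
  ring

lemma Lint_of_lt (n : ℕ) [NeZero n] (x : Fin n → ℝ) (t : ℤ) (h0 : 0 ≤ t) (h1 : t < n) :
    Lint n x t = x (t : Fin n) := by
  unfold Lint
  rw [Int.ediv_eq_zero_of_lt h0 (by exact_mod_cast h1), zpow_zero, one_mul]

lemma coe_int_fin (n : ℕ) [NeZero n] (t : ℤ) (h0 : 0 ≤ t) (h1 : t < n) :
    ((t : Fin n) : ℕ) = t.toNat := by
  obtain ⟨m, rfl⟩ := Int.eq_ofNat_of_zero_le h0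
  rw [Int.cast_natCast, Int.toNat_natCast]
  exact Fin.val_cast_of_lt (by exact_mod_cast h1)

lemma Lint_add (n : ℕ) [NeZero n] (x y : Fin n → ℝ) (t : ℤ) :
    Lint n (x + y) t = Lint n x t + Lint n y t := by
  unfold Lint; simp [Pi.add_apply]; ring

lemma Lint_smul (n : ℕ) [NeZero n] (c : ℝ) (x : Fin n → ℝ) (t : ℤ) :
    Lint n (c • x) t = c * Lint n x t := by
  unfold Lint; simp [Pi.smul_apply]; ring

lemma Lint_zero (n : ℕ) [NeZero n] (t : ℤ) : Lint n (0 : Fin n → ℝ) t = 0 := by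
  unfold Lint; simp

lemma sin_factor (n : ℕ) (hn : 0 < n) (a : ℤ) : ∃ A B : ℂ, ∀ t : ℤ,
    ((Real.sin (Real.pi * (t - a + 1/2) / (2*n)) : ℝ) : ℂ)
      = A * om4 n ^ t + B * om4 n ^ (-t) := by
  have hne : ((2 * n : ℕ) : ℂ) ≠ 0 := Nat.cast_ne_zero.2 (by omega)
  refine ⟨-Complex.exp (Real.pi * Complex.I * (1/2 - a) / (2*n)) * Complex.I / 2,
    Complex.exp (-(Real.pi * Complex.I * (1/2 - a) / (2*n))) * Complex.I / 2, fun t => ?_⟩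
  rw [Complex.ofReal_sin, Complex.sin]
  have h1 : (↑(Real.pi * (↑t - ↑a + 1/2) / (2*↑n)) : ℂ) * Complex.I
      = (t : ℂ) * (Real.pi * Complex.I / (2*n)) + Real.pi * Complex.I * (1/2 - a) / (2*n) := by
    push_cast
    have : (2 * (n:ℂ)) ≠ 0 := by simpa using hne
    field_simp
    ring
  rw [neg_mul, h1,
    show -((t : ℂ) * (Real.pi * Complex.I / (2*n)) + Real.pi * Complex.I * (1/2 - a) / (2*n))
      = (-t : ℂ) * (Real.pi * Complex.I / (2*n)) + (-(Real.pi * Complex.I * (1/2 - a) / (2*n))) by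
    push_cast; ring]
  rw [Complex.exp_add, Complex.exp_add, om4_zpow, om4_zpow]
  push_cast
  ring

lemma expand (n : ℕ) (hn : 0 < n) (s : Finset ℤ) :
    ∃ γ : ℕ → ℂ, ∀ t : ℤ,
      ((∏ c ∈ s, Real.sin (Real.pi * (t - c + 1/2) / (2*n)) : ℝ) : ℂ)
        = ∑ k ∈ Finset.range (s.card + 1), γ k * om4 n ^ (((s.card : ℤ) - 2*k) * t) := by
  classical
  induction s using Finset.cons_induction with
  | empty => exact ⟨fun _ => 1, by simp⟩
  | cons a s ha ih =>
    obtain ⟨γ, hγ⟩ := ih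
    obtain ⟨A, B, hAB⟩ := sin_factor n hn a
    refine ⟨fun k => A * (if k ≤ s.card then γ k else 0)
      + B * (match k with | 0 => 0 | k+1 => if k ≤ s.card then γ k else 0), ?_⟩
    intro t
    rw [Finset.prod_cons, Finset.card_cons, Complex.ofReal_mul, hAB t, hγ t, Finset.mul_sum]
    have hom := om4_ne_zero n
    have key : ∀ k : ℕ,
        (A * om4 n ^ t + B * om4 n ^ (-t)) * (γ k * om4 n ^ (((s.card:ℤ) - 2*k) * t))
        = A * γ k * om4 n ^ ((((s.card:ℤ)+1) - 2*k) * t)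
          + B * γ k * om4 n ^ ((((s.card:ℤ)+1) - 2*(k+1)) * t) := by
      intro k
      have e1 : (((s.card:ℤ)+1) - 2*k) * t = ((s.card:ℤ) - 2*k) * t + t := by ring
      have e2 : (((s.card:ℤ)+1) - 2*((k:ℤ)+1)) * t = ((s.card:ℤ) - 2*k) * t + (-t) := by ring
      rw [e1, e2, zpow_add₀ hom, zpow_add₀ hom]
      ring
    rw [Finset.sum_congr rfl (fun k _ => key k)]
    rw [Finset.sum_add_distrib]
    have hS1 : ∑ k ∈ Finset.range (s.card + 1 + 1),
        (A * (if k ≤ s.card then γ k else 0)) * om4 n ^ ((((s.card:ℤ)+1) - 2*k) * t)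
        = ∑ k ∈ Finset.range (s.card + 1), A * γ k * om4 n ^ ((((s.card:ℤ)+1) - 2*k) * t) := by
      rw [Finset.sum_range_succ, if_neg (by omega), mul_zero, zero_mul, add_zero]
      exact Finset.sum_congr rfl fun k hk => by
        rw [if_pos (by exact Nat.lt_succ_iff.1 (Finset.mem_range.1 hk))]
    have hS2 : ∑ k ∈ Finset.range (s.card + 1 + 1),
        (B * (match k with | 0 => 0 | k+1 => if k ≤ s.card then γ k else 0))
          * om4 n ^ ((((s.card:ℤ)+1) - 2*k) * t)
        = ∑ k ∈ Finset.range (s.card + 1), B * γ k * om4 n ^ ((((s.card:ℤ)+1) - 2*((k:ℤ)+1)) * t) := by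
      rw [Finset.sum_range_succ']
      have : (B * (match (0:ℕ) with | 0 => (0:ℂ) | k+1 => if k ≤ s.card then γ k else 0))
          * om4 n ^ ((((s.card:ℤ)+1) - 2*(0:ℕ)) * t) = 0 := by
        simp
      rw [this, add_zero]
      refine Finset.sum_congr rfl fun k hk => ?_
      have hks : k ≤ s.card := Nat.lt_succ_iff.1 (Finset.mem_range.1 hk)
      show (B * (if k ≤ s.card then γ k else 0)) * om4 n ^ ((((s.card:ℤ)+1) - 2*((k:ℕ)+1:ℕ)) * t)
          = B * γ k * om4 n ^ ((((s.card:ℤ)+1) - 2*((k:ℤ)+1)) * t)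
      rw [if_pos hks]
      push_cast
      ring
    rw [← hS1, ← hS2, ← Finset.sum_add_distrib]
    exact Finset.sum_congr rfl fun k _ => by push_cast; ring

end Stmt11Aux

section CoreTest
open Finset
namespace Stmt11Aux

lemma sin_pos_aux (n : ℕ) (hn : 0 < n) (t c : ℤ) (hc : c ≤ t) (hlt : t - c < 2*(n:ℤ)) :
    0 < Real.sin (Real.pi * ((t:ℝ) - (c:ℝ) + 1/2) / (2*(n:ℝ))) := by
  have hnR : (0:ℝ) < 2*(n:ℝ) := by positivity
  have hx0 : 0 < (t:ℝ) - c + 1/2 := by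
    have : (c:ℝ) ≤ t := by exact_mod_cast hc
    linarith
  have hx1 : (t:ℝ) - c + 1/2 < 2*(n:ℝ) := by
    have h2 : ((t - c + 1 : ℤ) : ℝ) ≤ ((2*(n:ℤ) : ℤ) : ℝ) := by exact_mod_cast hlt
    push_cast at h2
    linarith
  apply Real.sin_pos_of_pos_of_lt_pi
  · exact div_pos (mul_pos Real.pi_pos hx0) hnR
  · rw [mul_div_assoc]
    exact mul_lt_of_lt_one_right Real.pi_pos ((div_lt_one hnR).2 hx1)

lemma sin_neg_aux (n : ℕ) (hn : 0 < n) (t c : ℤ) (hc : t < c) (hlt : c - t < 2*(n:ℤ)) :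
    Real.sin (Real.pi * ((t:ℝ) - (c:ℝ) + 1/2) / (2*(n:ℝ))) < 0 := by
  have h := sin_pos_aux n hn (-t) (-c+1) (by omega) (by omega)
  have e : Real.pi * ((-t:ℤ) - ((-c+1:ℤ):ℝ) + 1/2) / (2*(n:ℝ))
      = -(Real.pi * ((t:ℝ) - (c:ℝ) + 1/2) / (2*(n:ℝ))) := by push_cast; ring
  rw [e, Real.sin_neg] at h
  linarith

lemma core (n : ℕ) (hn : 0 < n) (ζ σ : ℤ → ℝ)
    (hσv : ∀ t, σ t = 1 ∨ σ t = -1)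
    (hper : σ (-1) = σ (2*(n:ℤ) - 1))
    (hcompat : ∀ t, ζ t ≠ 0 → 0 < ζ t * σ t)
    (t₀ : ℕ) (ht₀ : t₀ < 2*n) (hζ0 : ζ (t₀ : ℤ) ≠ 0)
    (d : ℕ)
    (horth : ∀ μ : ℤ, |μ| < (d:ℤ) →
      ∑ t ∈ Finset.range (2*n), (ζ (t:ℤ) : ℂ) * om n ^ (μ * (t:ℤ)) = 0) :
    2 * d ≤ ((Finset.Ico (0:ℤ) (2*(n:ℤ))).filter (fun t => σ t * σ (t-1) < 0)).card := by
  classical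
  by_contra hcon
  push_neg at hcon
  set C := (Finset.Ico (0:ℤ) (2*(n:ℤ))).filter (fun t => σ t * σ (t-1) < 0) with hCdef
  have hσsq : ∀ t, σ t * σ t = 1 := fun t => by rcases hσv t with h | h <;> rw [h] <;> norm_num
  have hσne : ∀ t, σ t ≠ 0 := fun t => by rcases hσv t with h | h <;> rw [h] <;> norm_num
  have hprodpm : ∀ t, σ t * σ (t-1) = 1 ∨ σ t * σ (t-1) = -1 := by
    intro t
    rcases hσv t with h | h <;> rcases hσv (t-1) with h' | h' <;> rw [h, h'] <;> norm_num
  have hCmem : ∀ c ∈ C, 0 ≤ c ∧ c < 2*(n:ℤ) :=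
    fun c hc => Finset.mem_Ico.1 (Finset.mem_filter.1 hc).1
  -- evenness of C.card
  have hCeven : Even C.card := by
    have hQne : ∏ t ∈ Finset.Ico (0:ℤ) (2*(n:ℤ) - 1), σ t ≠ 0 :=
      Finset.prod_ne_zero_iff.2 fun t _ => hσne t
    have hsplit1 : Finset.Ico (0:ℤ) (2*(n:ℤ)) = insert (2*(n:ℤ)-1) (Finset.Ico (0:ℤ) (2*(n:ℤ)-1)) := by
      ext u; simp only [Finset.mem_Ico, Finset.mem_insert]; omega
    have hsplit2 : Finset.Ico (-1:ℤ) (2*(n:ℤ)-1) = insert (-1:ℤ) (Finset.Ico (0:ℤ) (2*(n:ℤ)-1)) := by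
      ext u; simp only [Finset.mem_Ico, Finset.mem_insert]; omega
    have hP1 : ∏ t ∈ Finset.Ico (0:ℤ) (2*(n:ℤ)), (σ t * σ (t-1))
        = (-1:ℝ)^C.card := by
      have h1 : ∏ t ∈ Finset.Ico (0:ℤ) (2*(n:ℤ)), (σ t * σ (t-1))
          = ∏ t ∈ Finset.Ico (0:ℤ) (2*(n:ℤ)), (if σ t * σ (t-1) < 0 then (-1:ℝ) else 1) := by
        refine Finset.prod_congr rfl fun t _ => ?_
        rcases hprodpm t with h | h
        · rw [h, if_neg (by norm_num)]
        · rw [h, if_pos (by norm_num)]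
      rw [h1, Finset.prod_ite, Finset.prod_const, Finset.prod_const, one_pow, mul_one, hCdef]
    have hP2 : 0 < ∏ t ∈ Finset.Ico (0:ℤ) (2*(n:ℤ)), (σ t * σ (t-1)) := by
      rw [Finset.prod_mul_distrib]
      have hre : ∏ t ∈ Finset.Ico (0:ℤ) (2*(n:ℤ)), σ (t-1)
          = ∏ u ∈ Finset.Ico (-1:ℤ) (2*(n:ℤ)-1), σ u := by
        refine Finset.prod_nbij' (fun t => t - 1) (fun u => u + 1) ?_ ?_ ?_ ?_ ?_
        · intro a ha; simp only [Finset.mem_Ico] at *; omega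
        · intro a ha; simp only [Finset.mem_Ico] at *; omega
        · intro a _; ring
        · intro a _; ring
        · intro a _; rfl
      rw [hre, hsplit1, hsplit2, Finset.prod_insert (by simp), Finset.prod_insert (by simp), hper]
      exact mul_self_pos.2 (mul_ne_zero (hσne _) hQne)
    rw [hP1] at hP2
    by_contra hodd
    rw [(Nat.not_even_iff_odd.1 hodd).neg_one_pow] at hP2
    linarith
  -- the sine product
  set T : ℤ → ℝ := fun t => ∏ c ∈ C, Real.sin (Real.pi * ((t:ℝ) - (c:ℝ) + 1/2) / (2*(n:ℝ))) with hTdef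
  have hTne : ∀ t : ℤ, 0 ≤ t → t < 2*(n:ℤ) → T t ≠ 0 := by
    intro t h0 h1
    refine Finset.prod_ne_zero_iff.2 fun c hc => ?_
    obtain ⟨hc0, hc1⟩ := hCmem c hc
    rcases le_or_gt c t with h | h
    · exact (sin_pos_aux n hn t c h (by omega)).ne'
    · exact (sin_neg_aux n hn t c h (by omega)).ne
  have hstep : ∀ t : ℤ, 0 < t → t < 2*(n:ℤ) → 0 < (T t * σ t) * (T (t-1) * σ (t-1)) := by
    intro t h0 h1
    have hTT : T t * T (t-1) = ∏ c ∈ C,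
        (Real.sin (Real.pi * ((t:ℝ) - (c:ℝ) + 1/2) / (2*(n:ℝ)))
          * Real.sin (Real.pi * (((t-1:ℤ):ℝ) - (c:ℝ) + 1/2) / (2*(n:ℝ)))) := by
      simp only [hTdef]
      exact (Finset.prod_mul_distrib).symm
    have hfac : ∀ c ∈ C, c ≠ t →
        0 < Real.sin (Real.pi * ((t:ℝ) - (c:ℝ) + 1/2) / (2*(n:ℝ)))
          * Real.sin (Real.pi * (((t-1:ℤ):ℝ) - (c:ℝ) + 1/2) / (2*(n:ℝ))) := by
      intro c hc hne
      obtain ⟨hc0, hc1⟩ := hCmem c hc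
      rcases le_or_gt c t with h | h
      · have hct : c ≤ t - 1 := by omega
        exact mul_pos (sin_pos_aux n hn t c h (by omega))
          (sin_pos_aux n hn (t-1) c hct (by omega))
      · exact mul_pos_of_neg_of_neg (sin_neg_aux n hn t c h (by omega))
          (sin_neg_aux n hn (t-1) c (by omega) (by omega))
    by_cases htC : t ∈ C
    · have hσn : σ t * σ (t-1) < 0 := (Finset.mem_filter.1 htC).2
      have hTn : T t * T (t-1) < 0 := by
        rw [hTT, ← Finset.mul_prod_erase _ _ htC]
        apply mul_neg_of_neg_of_pos
        · exact mul_neg_of_pos_of_neg (sin_pos_aux n hn t t le_rfl (by omega))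
            (sin_neg_aux n hn (t-1) t (by omega) (by omega))
        · exact Finset.prod_pos fun c hc =>
            hfac c (Finset.mem_of_mem_erase hc) (Finset.ne_of_mem_erase hc)
      nlinarith [mul_pos_of_neg_of_neg hTn hσn]
    · have hσp : 0 < σ t * σ (t-1) := by
        have hnot : ¬ (σ t * σ (t-1) < 0) := fun hlt =>
          htC (Finset.mem_filter.2 ⟨Finset.mem_Ico.2 ⟨le_of_lt h0, h1⟩, hlt⟩)
        rcases hprodpm t with h | h
        · rw [h]; norm_num
        · exact absurd (by rw [h]; norm_num) hnot
      have hTp : 0 < T t * T (t-1) := by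
        rw [hTT]
        refine Finset.prod_pos fun c hc => hfac c hc ?_
        rintro rfl; exact htC hc
      nlinarith [mul_pos hTp hσp]
  have hsign : ∀ m : ℕ, (m:ℤ) < 2*(n:ℤ) → 0 < (T (m:ℤ) * σ (m:ℤ)) * (T 0 * σ 0) := by
    intro m
    induction m with
    | zero =>
      intro _
      push_cast
      exact mul_self_pos.2 (mul_ne_zero (hTne 0 le_rfl (by omega)) (hσne 0))
    | succ m ih =>
      intro hlt
      have hlt' : ((m:ℤ)+1) < 2*(n:ℤ) := by push_cast at hlt; omega
      have ih' := ih (by omega)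
      have hs := hstep ((m:ℤ)+1) (by omega) hlt'
      have e : ((m:ℤ)+1) - 1 = (m:ℤ) := by ring
      rw [e] at hs
      have e2 : (((m+1:ℕ)):ℤ) = (m:ℤ)+1 := by push_cast; ring
      rw [e2]
      nlinarith [mul_pos hs ih', sq_nonneg (T (m:ℤ) * σ (m:ℤ))]
  -- expansion and orthogonality
  obtain ⟨v, hv⟩ := hCeven
  obtain ⟨γ, hγ⟩ := expand n hn C
  have hzero : ∑ t ∈ Finset.range (2*n), (ζ (t:ℤ) : ℂ) * ((T (t:ℤ) : ℝ) : ℂ) = 0 := by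
    have hsum : ∀ t : ℕ, (ζ (t:ℤ) : ℂ) * ((T (t:ℤ) : ℝ) : ℂ)
        = ∑ k ∈ Finset.range (C.card + 1),
            γ k * ((ζ (t:ℤ) : ℂ) * om4 n ^ (((C.card : ℤ) - 2*k) * (t:ℤ))) := by
      intro t
      have : ((T (t:ℤ) : ℝ) : ℂ)
          = ∑ k ∈ Finset.range (C.card + 1), γ k * om4 n ^ (((C.card : ℤ) - 2*k) * (t:ℤ)) := by
        simp only [hTdef]
        exact hγ (t:ℤ)
      rw [this, Finset.mul_sum]
      exact Finset.sum_congr rfl fun k _ => by ring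
    rw [Finset.sum_congr rfl fun t _ => hsum t, Finset.sum_comm]
    refine Finset.sum_eq_zero fun k hk => ?_
    have hk' : k ≤ C.card := Nat.lt_succ_iff.1 (Finset.mem_range.1 hk)
    have hke : ∀ t : ℕ, om4 n ^ (((C.card : ℤ) - 2*k) * (t:ℤ)) = om n ^ (((v:ℤ) - k) * (t:ℤ)) := by
      intro t
      have e : ((C.card : ℤ) - 2*k) * (t:ℤ) = 2 * (((v:ℤ) - k) * (t:ℤ)) := by
        have : (C.card : ℤ) = (v:ℤ) + (v:ℤ) := by exact_mod_cast congrArg (Nat.cast : ℕ → ℤ) hv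
        rw [this]; ring
      rw [e, zpow_mul, om4_sq n hn]
    have habs : |(v:ℤ) - k| < (d:ℤ) := by
      rw [abs_lt]
      constructor <;> [skip; skip] <;>
        · have h1 : v + v < 2*d := hv ▸ hcon
          have h2 : k ≤ v + v := hv ▸ hk'
          omega
    calc ∑ t ∈ Finset.range (2*n), γ k * ((ζ (t:ℤ) : ℂ) * om4 n ^ (((C.card : ℤ) - 2*k) * (t:ℤ)))
        = γ k * ∑ t ∈ Finset.range (2*n), (ζ (t:ℤ) : ℂ) * om n ^ (((v:ℤ) - k) * (t:ℤ)) := by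
          rw [Finset.mul_sum]
          exact Finset.sum_congr rfl fun t _ => by rw [hke t]
      _ = 0 := by rw [horth _ habs, mul_zero]
  have hrzero : ∑ t ∈ Finset.range (2*n), ζ (t:ℤ) * T (t:ℤ) = 0 := by
    have h : ((∑ t ∈ Finset.range (2*n), ζ (t:ℤ) * T (t:ℤ) : ℝ) : ℂ) = 0 := by
      push_cast
      convert hzero using 2 with t
    exact_mod_cast h
  have hterm : ∀ t : ℕ, t < 2*n → ζ (t:ℤ) ≠ 0 →
      0 < ζ (t:ℤ) * T (t:ℤ) * (T 0 * σ 0) := by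
    intro t ht h
    have h1 := hcompat _ h
    have h2 := hsign t (by exact_mod_cast ht)
    have e : ζ (t:ℤ) * T (t:ℤ) * (T 0 * σ 0)
        = (ζ (t:ℤ) * σ (t:ℤ)) * ((T (t:ℤ) * σ (t:ℤ)) * (T 0 * σ 0)) := by
      have h3 := hσsq (t:ℤ)
      linear_combination (-(ζ (t:ℤ) * T (t:ℤ) * (T 0 * σ 0))) * h3
    rw [e]
    exact mul_pos h1 h2
  have hpos : 0 < (∑ t ∈ Finset.range (2*n), ζ (t:ℤ) * T (t:ℤ)) * (T 0 * σ 0) := by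
    rw [Finset.sum_mul]
    refine Finset.sum_pos' (fun t ht => ?_) ⟨t₀, Finset.mem_range.2 ht₀, ?_⟩
    · rcases eq_or_ne (ζ (t:ℤ)) 0 with h | h
      · rw [h, zero_mul, zero_mul]
      · exact le_of_lt (hterm t (Finset.mem_range.1 ht) h)
    · exact hterm t₀ ht₀ hζ0
  rw [hrzero, zero_mul] at hpos
  exact lt_irrefl 0 hpos

end Stmt11Aux
end CoreTest

namespace Stmt11Aux
open Complex

variable (n : ℕ) [NeZero n]

/-- generator vectors -/
noncomputable def uvec (k : ℕ) : Fin n → ℝ :=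
  fun i => Real.cos (Real.pi * (2*k+1) / n * i)
noncomputable def wvec (k : ℕ) : Fin n → ℝ :=
  fun i => Real.sin (Real.pi * (2*k+1) / n * i)

lemma npos : 0 < n := Nat.pos_of_ne_zero (NeZero.ne n)

lemma Lint_trig (k : ℕ) (t : ℤ) :
    Lint n (uvec n k) t = Real.cos (Real.pi * (2*k+1) / n * t) ∧
    Lint n (wvec n k) t = Real.sin (Real.pi * (2*k+1) / n * t) := by
  have hn : 0 < n := npos n
  have hq := Int.mul_ediv_add_emod t n
  set q := t / (n:ℤ) with hqdef
  set r := t % (n:ℤ) with hrdef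
  have hr0 : 0 ≤ r := Int.emod_nonneg t (by exact_mod_cast hn.ne')
  have hr1 : r < n := Int.emod_lt_of_pos t (by exact_mod_cast hn)
  have hcast : ((t : Fin n) : ℕ) = r.toNat := by
    have : ((r : Fin n) : ℕ) = r.toNat := coe_int_fin n r hr0 hr1
    rw [← this]
    congr 1
    have : (t : Fin n) = ((n:ℤ) * q + r : ℤ) := by rw [hq]
    rw [this]
    push_cast
    simp
  have hcastR : (((t : Fin n) : ℕ) : ℝ) = (r : ℝ) := by
    rw [hcast]
    exact_mod_cast congrArg (Int.cast : ℤ → ℝ) (Int.toNat_of_nonneg hr0)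
  have hrR : ((r.toNat : ℕ) : ℝ) = (r : ℝ) := by exact_mod_cast Int.toNat_of_nonneg hr0
  have htR : (t : ℝ) = (n : ℝ) * (q : ℝ) + (r : ℝ) := by exact_mod_cast congrArg (Int.cast : ℤ → ℝ) hq.symm
  have hnR : (n : ℝ) ≠ 0 := by positivity
  have harg : Real.pi * (2*k+1) / n * (t:ℝ)
      = Real.pi * (2*k+1) / n * (r:ℝ) + ((2*k+1) * q : ℤ) * Real.pi := by
    rw [htR]
    push_cast
    field_simp
    ring
  have hsgn : ((-1:ℝ)) ^ ((2*(k:ℤ)+1) * q) = (-1:ℝ) ^ q := by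
    rw [show (2*(k:ℤ)+1) * q = 2*((k:ℤ)*q) + q by ring,
      zpow_add₀ (by norm_num : (-1:ℝ) ≠ 0), zpow_mul]
    norm_num
  constructor
  · rw [Lint]
    show (-1:ℝ)^q * Real.cos (Real.pi * (2*k+1) / n * (((t : Fin n) : ℕ) : ℝ)) = _
    rw [hcastR, harg, Real.cos_add_int_mul_pi, hsgn]
  · rw [Lint]
    show (-1:ℝ)^q * Real.sin (Real.pi * (2*k+1) / n * (((t : Fin n) : ℕ) : ℝ)) = _
    rw [hcastR, harg, Real.sin_add_int_mul_pi, hsgn]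

end Stmt11Aux

namespace Stmt11Aux
open Complex

variable (n : ℕ) [NeZero n]

/-- The subspace of vectors whose lift is orthogonal to the characters in `B`. -/
noncomputable def Omod (B : Set ℤ) : Submodule ℝ (Fin n → ℝ) where
  carrier := {x | ∀ μ ∈ B,
    ∑ t ∈ Finset.range (2*n), (Lint n x (t:ℤ) : ℂ) * om n ^ (μ * (t:ℤ)) = 0}
  add_mem' := by
    intro a b ha hb μ hμ
    have h : ∀ t : ℕ, (Lint n (a + b) (t:ℤ) : ℂ) * om n ^ (μ * (t:ℤ))
        = (Lint n a (t:ℤ) : ℂ) * om n ^ (μ * (t:ℤ))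
          + (Lint n b (t:ℤ) : ℂ) * om n ^ (μ * (t:ℤ)) := by
      intro t
      rw [Lint_add]
      push_cast
      ring
    rw [Finset.sum_congr rfl fun t _ => h t, Finset.sum_add_distrib, ha μ hμ, hb μ hμ, add_zero]
  zero_mem' := by
    intro μ hμ
    have h : ∀ t : ℕ, (Lint n (0 : Fin n → ℝ) (t:ℤ) : ℂ) * om n ^ (μ * (t:ℤ)) = 0 := by
      intro t
      rw [Lint_zero]
      simp
    rw [Finset.sum_congr rfl fun t _ => h t]
    simp
  smul_mem' := by
    intro c a ha
    intro μ hμ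
    have h : ∀ t : ℕ, (Lint n (c • a) (t:ℤ) : ℂ) * om n ^ (μ * (t:ℤ))
        = (c:ℂ) * ((Lint n a (t:ℤ) : ℂ) * om n ^ (μ * (t:ℤ))) := by
      intro t
      rw [Lint_smul]
      push_cast
      ring
    rw [Finset.sum_congr rfl fun t _ => h t, ← Finset.mul_sum]
    rw [ha μ hμ, mul_zero]

lemma mem_Omod_iff (B : Set ℤ) (x : Fin n → ℝ) :
    x ∈ Omod n B ↔ ∀ μ ∈ B,
      ∑ t ∈ Finset.range (2*n), (Lint n x (t:ℤ) : ℂ) * om n ^ (μ * (t:ℤ)) = 0 :=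
  Iff.rfl

lemma trig_mem_Omod (k : ℕ) (B : Set ℤ)
    (hB : ∀ μ ∈ B, ¬ (2*(n:ℤ)) ∣ (μ + (2*(k:ℤ)+1)) ∧ ¬ (2*(n:ℤ)) ∣ (μ - (2*(k:ℤ)+1))) :
    uvec n k ∈ Omod n B ∧ wvec n k ∈ Omod n B := by
  have hn : 0 < n := npos n
  have hnC : (n:ℂ) ≠ 0 := Nat.cast_ne_zero.2 hn.ne'
  have hom := om_ne_zero n
  have hkey : ∀ t : ℤ, ((Real.pi * (2*(k:ℝ)+1) / n * (t:ℝ) : ℝ) : ℂ) * Complex.I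
      = (((2*(k:ℤ)+1) * t : ℤ) : ℂ) * (Real.pi * Complex.I / n) := by
    intro t
    push_cast
    field_simp
  have hkey2 : ∀ t : ℤ, -((Real.pi * (2*(k:ℝ)+1) / n * (t:ℝ) : ℝ) : ℂ) * Complex.I
      = ((-((2*(k:ℤ)+1) * t) : ℤ) : ℂ) * (Real.pi * Complex.I / n) := by
    intro t
    rw [neg_mul, hkey t]
    push_cast
    ring
  have hsplit : ∀ μ ∈ B, ∀ t : ℕ,
      (om n ^ ((2*(k:ℤ)+1) * (t:ℤ)) + om n ^ (-((2*(k:ℤ)+1) * (t:ℤ)))) / 2 * om n ^ (μ * (t:ℤ))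
        = om n ^ ((μ + (2*(k:ℤ)+1)) * (t:ℤ)) / 2 + om n ^ ((μ - (2*(k:ℤ)+1)) * (t:ℤ)) / 2 := by
    intro μ _ t
    rw [show (μ + (2*(k:ℤ)+1)) * (t:ℤ) = (2*(k:ℤ)+1) * t + μ * t by ring,
      show (μ - (2*(k:ℤ)+1)) * (t:ℤ) = -((2*(k:ℤ)+1) * t) + μ * t by ring,
      zpow_add₀ hom, zpow_add₀ hom]
    ring
  have hgeom : ∀ μ ∈ B, ∑ t ∈ Finset.range (2*n),
        (om n ^ ((μ + (2*(k:ℤ)+1)) * (t:ℤ)) / 2 + om n ^ ((μ - (2*(k:ℤ)+1)) * (t:ℤ)) / 2) = 0 := by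
    intro μ hμ
    rw [Finset.sum_add_distrib, ← Finset.sum_div, ← Finset.sum_div,
      om_geom_sum n hn _ (hB μ hμ).1, om_geom_sum n hn _ (hB μ hμ).2]
    norm_num
  constructor
  · intro μ hμ
    have hterm : ∀ t : ℕ, (Lint n (uvec n k) (t:ℤ) : ℂ) * om n ^ (μ * (t:ℤ))
        = om n ^ ((μ + (2*(k:ℤ)+1)) * (t:ℤ)) / 2 + om n ^ ((μ - (2*(k:ℤ)+1)) * (t:ℤ)) / 2 := by
      intro t
      rw [(Lint_trig n k (t:ℤ)).1, ← hsplit μ hμ t]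
      congr 1
      rw [Complex.ofReal_cos, Complex.cos, om_zpow, om_zpow, ← hkey (t:ℤ), ← hkey2 (t:ℤ)]
    rw [Finset.sum_congr rfl fun t _ => hterm t]
    exact hgeom μ hμ
  · intro μ hμ
    have hterm : ∀ t : ℕ, (Lint n (wvec n k) (t:ℤ) : ℂ) * om n ^ (μ * (t:ℤ))
        = (om n ^ (-((2*(k:ℤ)+1) * (t:ℤ))) - om n ^ ((2*(k:ℤ)+1) * (t:ℤ))) * Complex.I / 2
            * om n ^ (μ * (t:ℤ)) := by
      intro t
      rw [(Lint_trig n k (t:ℤ)).2]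
      congr 1
      rw [Complex.ofReal_sin, Complex.sin, om_zpow, om_zpow, ← hkey (t:ℤ), ← hkey2 (t:ℤ)]
    have hterm2 : ∀ t : ℕ,
        (om n ^ (-((2*(k:ℤ)+1) * (t:ℤ))) - om n ^ ((2*(k:ℤ)+1) * (t:ℤ))) * Complex.I / 2
            * om n ^ (μ * (t:ℤ))
        = (om n ^ ((μ - (2*(k:ℤ)+1)) * (t:ℤ)) / 2) * Complex.I
          - (om n ^ ((μ + (2*(k:ℤ)+1)) * (t:ℤ)) / 2) * Complex.I := by
      intro t
      rw [show (μ + (2*(k:ℤ)+1)) * (t:ℤ) = (2*(k:ℤ)+1) * t + μ * t by ring,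
        show (μ - (2*(k:ℤ)+1)) * (t:ℤ) = -((2*(k:ℤ)+1) * t) + μ * t by ring,
        zpow_add₀ hom, zpow_add₀ hom]
      ring
    rw [Finset.sum_congr rfl fun t _ => (hterm t).trans (hterm2 t), Finset.sum_sub_distrib,
      ← Finset.sum_mul, ← Finset.sum_mul, ← Finset.sum_div, ← Finset.sum_div,
      om_geom_sum n hn _ (hB μ hμ).2, om_geom_sum n hn _ (hB μ hμ).1]
    norm_num

end Stmt11Aux

namespace Stmt11Aux
open Complex

variable (n : ℕ) [NeZero n]

lemma Lint_sub_n (x : Fin n → ℝ) (t : ℤ) : Lint n x (t - n) = - Lint n x t := by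
  have h := Lint_add_n n x (t - n)
  rw [sub_add_cancel] at h
  linarith

lemma cyclicN_eq_filter (x : Fin n → ℝ) [DecidablePred fun i : Fin n => cyclicDelta n i * x i * x (i-1) < 0] :
    cyclicN n x
      = (Finset.univ.filter (fun i : Fin n => cyclicDelta n i * x i * x (i-1) < 0)).card := by
  rw [cyclicN, Nat.card_eq_fintype_card, Fintype.card_subtype]

lemma key_prod (x : Fin n → ℝ) (i : Fin n) :
    Lint n x ((i:ℕ):ℤ) * Lint n x (((i:ℕ):ℤ) - 1) = cyclicDelta n i * x i * x (i-1) := by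
  have hn : 0 < n := npos n
  have hiI : ((i:ℕ):ℤ) < n := by exact_mod_cast i.isLt
  have hLi : Lint n x ((i:ℕ):ℤ) = x i := by
    rw [Lint_of_lt n x _ (by positivity) hiI]
    congr 1
    push_cast
    simp
  by_cases h0 : i = 0
  · subst h0
    have e0 : (((0:Fin n):ℕ):ℤ) = 0 := by simp
    rw [e0] at hLi ⊢
    have h1 : Lint n x ((0:ℤ) - 1) = - Lint n x ((n:ℤ) - 1) := by
      rw [show (0:ℤ) - 1 = ((n:ℤ) - 1) - n by ring]
      exact Lint_sub_n n x _
    have h2 : Lint n x ((n:ℤ) - 1) = x (0 - 1) := by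
      rw [Lint_of_lt n x _ (by omega) (by omega)]
      congr 1
      push_cast
      simp
    rw [h1, h2, hLi, cyclicDelta, if_pos rfl]
    ring
  · have hi1 : 1 ≤ (i:ℕ) := Nat.one_le_iff_ne_zero.2 fun h => h0 (Fin.ext h)
    have h2 : Lint n x (((i:ℕ):ℤ) - 1) = x (i - 1) := by
      rw [Lint_of_lt n x _ (by omega) (by omega)]
      congr 1
      have : ((((i:ℕ):ℤ) - 1 : ℤ) : Fin n) = (((i:ℕ):ℤ) : Fin n) - 1 := by push_cast; ring
      rw [this]
      congr 1
      push_cast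
      simp
    rw [h2, hLi, cyclicDelta, if_neg h0]
    ring

lemma changes_eq (x : Fin n → ℝ) [DecidablePred fun t : ℤ => Lint n x t * Lint n x (t-1) < 0]
    [DecidablePred fun i : Fin n => cyclicDelta n i * x i * x (i-1) < 0] :
    ((Finset.Ico (0:ℤ) (2*(n:ℤ))).filter (fun t => Lint n x t * Lint n x (t-1) < 0)).card
      = 2 * cyclicN n x := by
  have hn : 0 < n := npos n
  have hnZ : (0:ℤ) < n := by exact_mod_cast hn
  rw [cyclicN_eq_filter]
  rw [show Finset.Ico (0:ℤ) (2*(n:ℤ)) = Finset.Ico (0:ℤ) (n:ℤ) ∪ Finset.Ico (n:ℤ) (2*(n:ℤ)) from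
    (Finset.Ico_union_Ico_eq_Ico (by omega) (by omega)).symm, Finset.filter_union,
    Finset.card_union_of_disjoint
      (Finset.disjoint_filter_filter (Finset.Ico_disjoint_Ico_consecutive 0 (n:ℤ) (2*n)))]
  have hsecond : ((Finset.Ico (n:ℤ) (2*(n:ℤ))).filter (fun t => Lint n x t * Lint n x (t-1) < 0)).card
      = ((Finset.Ico (0:ℤ) (n:ℤ)).filter (fun t => Lint n x t * Lint n x (t-1) < 0)).card := by
    refine Finset.card_nbij' (fun t => t - n) (fun t => t + n) ?_ ?_ ?_ ?_
    · intro a ha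
      simp only [Finset.mem_coe, Finset.mem_filter, Finset.mem_Ico] at ha ⊢
      refine ⟨⟨by omega, by omega⟩, ?_⟩
      have e1 : Lint n x (a - n) = - Lint n x a := Lint_sub_n n x a
      have e2 : Lint n x (a - n - 1) = - Lint n x (a - 1) := by
        rw [show a - (n:ℤ) - 1 = (a - 1) - n by ring]
        exact Lint_sub_n n x _
      rw [e1, e2]
      nlinarith [ha.2]
    · intro a ha
      simp only [Finset.mem_coe, Finset.mem_filter, Finset.mem_Ico] at ha ⊢
      refine ⟨⟨by omega, by omega⟩, ?_⟩
      have e1 : Lint n x (a + n) = - Lint n x a := Lint_add_n n x a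
      have e2 : Lint n x (a + n - 1) = - Lint n x (a - 1) := by
        rw [show a + (n:ℤ) - 1 = (a - 1) + n by ring]
        exact Lint_add_n n x _
      rw [e1, e2]
      nlinarith [ha.2]
    · intro a _; ring
    · intro a _; ring
  rw [hsecond]
  have hfirst : ((Finset.Ico (0:ℤ) (n:ℤ)).filter (fun t => Lint n x t * Lint n x (t-1) < 0)).card
      = (Finset.univ.filter (fun i : Fin n => cyclicDelta n i * x i * x (i-1) < 0)).card := by
    refine Finset.card_nbij' (fun t => (t : Fin n)) (fun i => ((i:ℕ):ℤ)) ?_ ?_ ?_ ?_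
    · intro a ha
      simp only [Finset.mem_coe, Finset.mem_filter, Finset.mem_Ico] at ha
      simp only [Finset.mem_coe, Finset.mem_filter, Finset.mem_univ, true_and]
      have hval : (((a : Fin n):ℕ):ℤ) = a := by
        rw [coe_int_fin n a ha.1.1 ha.1.2]
        exact Int.toNat_of_nonneg ha.1.1
      rw [← key_prod n x (a : Fin n), hval]
      exact ha.2
    · intro i hi
      simp only [Finset.mem_coe, Finset.mem_filter, Finset.mem_univ, true_and] at hi
      simp only [Finset.mem_coe, Finset.mem_filter, Finset.mem_Ico]
      refine ⟨⟨by positivity, by exact_mod_cast i.isLt⟩, ?_⟩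
      rw [key_prod n x i]
      exact hi
    · intro a ha
      simp only [Finset.mem_coe, Finset.mem_filter, Finset.mem_Ico] at ha
      show (((a : Fin n) : ℕ) : ℤ) = a
      rw [coe_int_fin n a ha.1.1 ha.1.2]
      exact Int.toNat_of_nonneg ha.1.1
    · intro i _
      show ((((i:ℕ):ℤ)) : Fin n) = i
      push_cast
      simp
  rw [hfirst]
  ring

end Stmt11Aux

namespace Stmt11Aux
open Filter Topology

variable (n : ℕ) [NeZero n]

/-- sign completions of ξ -/
def compl' (ξ : Fin n → ℝ) : Set (Fin n → ℝ) :=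
  {σ | (∀ i, σ i = 1 ∨ σ i = -1) ∧ ∀ i, ξ i ≠ 0 → 0 < σ i * ξ i}

lemma compl'_nonempty (ξ : Fin n → ℝ) : (compl' n ξ).Nonempty := by
  classical
  refine ⟨fun i => if 0 < ξ i then 1 else -1, fun i => ?_, fun i h => ?_⟩
  · by_cases h : 0 < ξ i <;> simp [h]
  · show 0 < (if 0 < ξ i then (1:ℝ) else -1) * ξ i
    rcases lt_trichotomy (ξ i) 0 with hlt | heq | hgt
    · rw [if_neg (by linarith)]; nlinarith
    · exact absurd heq h
    · rw [if_pos hgt]; nlinarith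

lemma cyclicN_sign_eq (y z : Fin n → ℝ) (h : ∀ i, 0 < y i * z i) :
    cyclicN n y = cyclicN n z := by
  unfold cyclicN
  apply Nat.card_congr
  apply Equiv.subtypeEquivRight
  intro i
  have hd : cyclicDelta n i = 1 ∨ cyclicDelta n i = -1 := by
    unfold cyclicDelta; split <;> simp
  have h1 := h i
  have h2 := h (i-1)
  constructor <;> intro hlt <;> rcases hd with hd | hd <;> rw [hd] at hlt ⊢ <;>
    nlinarith [mul_pos h1 h2]

lemma freq_set_eq (ξ : Fin n → ℝ) :
    {k | ∃ᶠ y in 𝓝[cyclicLambda n] ξ, cyclicN n y = k} = cyclicN n '' compl' n ξ := by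
  classical
  ext k
  simp only [Set.mem_setOf_eq, Set.mem_image]
  constructor
  · intro hfreq
    have hopen : IsOpen {y : Fin n → ℝ | ∀ i, ξ i ≠ 0 → 0 < y i * ξ i} := by
      have he : {y : Fin n → ℝ | ∀ i, ξ i ≠ 0 → 0 < y i * ξ i}
          = ⋂ i, {y : Fin n → ℝ | ξ i ≠ 0 → 0 < y i * ξ i} := by
        ext y; simp [Set.mem_iInter]
      rw [he]
      refine isOpen_iInter_of_finite fun i => ?_
      by_cases h : ξ i = 0
      · simp [h]
      · have he2 : {y : Fin n → ℝ | ξ i ≠ 0 → 0 < y i * ξ i}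
            = (fun y : Fin n → ℝ => y i * ξ i) ⁻¹' Set.Ioi 0 := by
          ext y; simp [h]
        rw [he2]
        exact ((continuous_apply i).mul continuous_const).isOpen_preimage _ isOpen_Ioi
    have hE : {y : Fin n → ℝ | ∀ i, ξ i ≠ 0 → 0 < y i * ξ i} ∈ 𝓝 ξ :=
      hopen.mem_nhds (fun i hi => mul_self_pos.2 hi)
    obtain ⟨y, hy⟩ := ((hfreq.and_eventually (eventually_nhdsWithin_of_eventually_nhds
      (eventually_of_mem hE fun y hy => hy))).and_eventually self_mem_nhdsWithin).exists
    obtain ⟨⟨hNy, hsgn⟩, hΛ⟩ := hy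
    refine ⟨fun i => if 0 < y i then 1 else -1, ⟨fun i => ?_, fun i hξi => ?_⟩, ?_⟩
    · by_cases h : 0 < y i <;> simp [h]
    · show 0 < (if 0 < y i then (1:ℝ) else -1) * ξ i
      have h1 := hsgn i hξi
      by_cases h : 0 < y i
      · rw [if_pos h]; nlinarith
      · have hyne : y i ≠ 0 := hΛ i
        have hneg : y i < 0 := lt_of_le_of_ne (not_lt.1 h) hyne
        rw [if_neg h]; nlinarith
    · rw [← hNy]
      apply cyclicN_sign_eq
      intro i
      show 0 < (if 0 < y i then (1:ℝ) else -1) * y i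
      have hyne : y i ≠ 0 := hΛ i
      by_cases h : 0 < y i
      · rw [if_pos h]; nlinarith
      · have hneg : y i < 0 := lt_of_le_of_ne (not_lt.1 h) hyne
        rw [if_neg h]; nlinarith
  · rintro ⟨σ, ⟨hσv, hσc⟩, rfl⟩
    set y : ℕ → Fin n → ℝ := fun m i => if ξ i = 0 then σ i / ((m:ℝ)+1) else ξ i with hydef
    have hten : Tendsto y atTop (𝓝[cyclicLambda n] ξ) := by
      apply tendsto_nhdsWithin_of_tendsto_nhds_of_eventually_within
      · rw [tendsto_pi_nhds]
        intro i
        by_cases h : ξ i = 0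
        · simp only [hydef, if_pos h, h]
          rcases hσv i with h1 | h1 <;> rw [h1]
          · simpa using tendsto_one_div_add_atTop_nhds_zero_nat (𝕜 := ℝ)
          · have := (tendsto_one_div_add_atTop_nhds_zero_nat (𝕜 := ℝ)).neg
            simp only [neg_zero] at this
            simpa [neg_div] using this
        · simp only [hydef, if_neg h]
          exact tendsto_const_nhds
      · filter_upwards with m i
        by_cases h : ξ i = 0
        · simp only [hydef, if_pos h]
          rcases hσv i with h1 | h1 <;> rw [h1] <;>
            [positivity; · simp; positivity]
        · simp only [hydef, if_neg h]
          exact h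
    have hNy : ∀ m : ℕ, cyclicN n (y m) = cyclicN n σ := by
      intro m
      apply cyclicN_sign_eq
      intro i
      by_cases h : ξ i = 0
      · simp only [hydef, if_pos h]
        have : σ i * σ i = 1 := by rcases hσv i with h1 | h1 <;> rw [h1] <;> norm_num
        rw [div_mul_eq_mul_div, mul_comm]
        positivity
      · simp only [hydef, if_neg h]
        have := hσc i h
        nlinarith
    exact hten.frequently (Filter.Eventually.frequently (Filter.Eventually.of_forall hNy))

end Stmt11Aux

namespace Stmt11Aux
open Complex

variable (n : ℕ) [NeZero n]

lemma neg_one_zpow_pm (q : ℤ) : (-1:ℝ)^q = 1 ∨ (-1:ℝ)^q = -1 := by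
  rcases Int.even_or_odd q with h | h
  · left; exact h.neg_one_zpow
  · right; exact h.neg_one_zpow

lemma Lint_mul (x y : Fin n → ℝ) (t : ℤ) :
    Lint n x t * Lint n y t = x (t : Fin n) * y (t : Fin n) := by
  unfold Lint
  rcases neg_one_zpow_pm (t / (n:ℤ)) with h | h <;> rw [h] <;> ring

lemma Lint_ne_zero_iff (x : Fin n → ℝ) (t : ℤ) : Lint n x t ≠ 0 ↔ x (t : Fin n) ≠ 0 := by
  unfold Lint
  rcases neg_one_zpow_pm (t / (n:ℤ)) with h | h <;> rw [h] <;> simp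

lemma Lint_pm (σ : Fin n → ℝ) (hσ : ∀ i, σ i = 1 ∨ σ i = -1) (t : ℤ) :
    Lint n σ t = 1 ∨ Lint n σ t = -1 := by
  unfold Lint
  rcases neg_one_zpow_pm (t / (n:ℤ)) with h | h <;> rcases hσ (t : Fin n) with h2 | h2 <;>
    rw [h, h2] <;> norm_num

lemma Lint_two_n_sub_one (x : Fin n → ℝ) : Lint n x (-1) = Lint n x (2*(n:ℤ) - 1) := by
  have h1 := Lint_add_n n x (-1)
  have h2 := Lint_add_n n x ((-1) + n)
  rw [show (-1:ℤ) + (n:ℤ) + n = 2*(n:ℤ) - 1 by ring] at h2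
  rw [h2, h1, neg_neg]

lemma coe_cast_fin (i : Fin n) : ((((i:ℕ):ℤ)) : Fin n) = i := by
  push_cast
  simp

lemma LB (d : ℕ) (ξ : Fin n → ℝ) (hξ : ξ ∈ Omod n {μ : ℤ | |μ| < (d:ℤ)}) (hne : ξ ≠ 0)
    (σ : Fin n → ℝ) (hσ : σ ∈ compl' n ξ) : d ≤ cyclicN n σ := by
  classical
  have hn := npos n
  obtain ⟨i, hi⟩ := Function.ne_iff.1 hne
  have hi' : ξ i ≠ 0 := by simpa using hi
  have hζ0 : Lint n ξ ((i:ℕ):ℤ) ≠ 0 := by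
    rw [Lint_ne_zero_iff, coe_cast_fin]
    exact hi'
  have hcompat : ∀ t : ℤ, Lint n ξ t ≠ 0 → 0 < Lint n ξ t * Lint n σ t := by
    intro t ht
    rw [Lint_mul]
    have := hσ.2 _ ((Lint_ne_zero_iff n ξ t).1 ht)
    linarith [this]
  have hcore := core n hn (Lint n ξ) (Lint n σ) (Lint_pm n σ hσ.1)
    (Lint_two_n_sub_one n σ) hcompat (i:ℕ) (by have := i.isLt; omega) hζ0 d
    (fun μ hμ => hξ μ hμ)
  rw [changes_eq n σ] at hcore
  omega

lemma UB (d : ℕ) (ξ : Fin n → ℝ) (hξ : ξ ∈ Omod n {μ : ℤ | |μ - (n:ℤ)| < (d:ℤ)}) (hne : ξ ≠ 0)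
    (σ : Fin n → ℝ) (hσ : σ ∈ compl' n ξ) : cyclicN n σ + d ≤ n := by
  classical
  have hn := npos n
  have hom := om_ne_zero n
  set ζ' : ℤ → ℝ := fun t => (-1:ℝ)^t * Lint n ξ t with hζdef
  set σ' : ℤ → ℝ := fun t => (-1:ℝ)^t * Lint n σ t with hσdef
  have hσv' : ∀ t, σ' t = 1 ∨ σ' t = -1 := by
    intro t
    simp only [hσdef]
    rcases neg_one_zpow_pm t with h | h <;> rcases Lint_pm n σ hσ.1 t with h2 | h2 <;>
      rw [h, h2] <;> norm_num
  have hoddpow : ∀ t : ℤ, (-1:ℝ)^t * (-1:ℝ)^(t-1) = -1 := by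
    intro t
    rw [← zpow_add₀ (by norm_num : (-1:ℝ) ≠ 0)]
    exact Odd.neg_one_zpow ⟨t - 1, by ring⟩
  have hper' : σ' (-1) = σ' (2*(n:ℤ) - 1) := by
    simp only [hσdef]
    rw [← Lint_two_n_sub_one n σ]
    have h1 : ((-1:ℝ))^(-1:ℤ) = -1 := by norm_num
    have h2 : ((-1:ℝ))^(2*(n:ℤ)-1) = -1 := Odd.neg_one_zpow ⟨(n:ℤ) - 1, by ring⟩
    rw [h1, h2]
  have hcompat' : ∀ t : ℤ, ζ' t ≠ 0 → 0 < ζ' t * σ' t := by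
    intro t ht
    have hLξ : Lint n ξ t ≠ 0 := by
      intro h
      apply ht
      simp only [hζdef, h, mul_zero]
    have hprod : 0 < Lint n ξ t * Lint n σ t := by
      rw [Lint_mul]
      have := hσ.2 _ ((Lint_ne_zero_iff n ξ t).1 hLξ)
      linarith [this]
    simp only [hζdef, hσdef]
    rcases neg_one_zpow_pm t with h | h <;> rw [h] <;> nlinarith
  obtain ⟨i, hi⟩ := Function.ne_iff.1 hne
  have hi' : ξ i ≠ 0 := by simpa using hi
  have hζ0 : ζ' ((i:ℕ):ℤ) ≠ 0 := by
    simp only [hζdef]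
    apply mul_ne_zero
    · rcases neg_one_zpow_pm ((i:ℕ):ℤ) with h | h <;> rw [h] <;> norm_num
    · rw [Lint_ne_zero_iff, coe_cast_fin]
      exact hi'
  have horth' : ∀ μ : ℤ, |μ| < (d:ℤ) →
      ∑ t ∈ Finset.range (2*n), (ζ' (t:ℤ) : ℂ) * om n ^ (μ * (t:ℤ)) = 0 := by
    intro μ hμ
    have hterm : ∀ t : ℕ, (ζ' (t:ℤ) : ℂ) * om n ^ (μ * (t:ℤ))
        = (Lint n ξ (t:ℤ) : ℂ) * om n ^ ((μ + n) * (t:ℤ)) := by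
      intro t
      have h1 : (((-1:ℝ)^((t:ℕ):ℤ) : ℝ) : ℂ) = om n ^ ((n:ℤ) * (t:ℤ)) := by
        rw [Complex.ofReal_zpow, zpow_mul, om_pow_n n hn]
        push_cast
        ring
      simp only [hζdef]
      push_cast [Complex.ofReal_mul]
      rw [show ((-1:ℂ)^((t:ℕ):ℤ)) = ((((-1:ℝ)^((t:ℕ):ℤ) : ℝ)) : ℂ) by push_cast; ring]
      rw [h1, show (μ + (n:ℤ)) * (t:ℤ) = (n:ℤ) * t + μ * t by ring, zpow_add₀ hom]
      ring
    rw [Finset.sum_congr rfl fun t _ => hterm t]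
    refine hξ (μ + n) ?_
    simp only [Set.mem_setOf_eq, add_sub_cancel_right]
    exact hμ
  have hcore := core n hn ζ' σ' hσv' hper' hcompat' (i:ℕ) (by have := i.isLt; omega) hζ0 d horth'
  have hcompl : (Finset.Ico (0:ℤ) (2*(n:ℤ))).filter (fun t => σ' t * σ' (t-1) < 0)
      = Finset.Ico (0:ℤ) (2*(n:ℤ)) \
        (Finset.Ico (0:ℤ) (2*(n:ℤ))).filter (fun t => Lint n σ t * Lint n σ (t-1) < 0) := by
    ext t
    simp only [Finset.mem_filter, Finset.mem_sdiff, Finset.mem_Ico, not_and]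
    have he : σ' t * σ' (t-1) = -(Lint n σ t * Lint n σ (t-1)) := by
      simp only [hσdef]
      linear_combination (Lint n σ t * Lint n σ (t-1)) * hoddpow t
    have hpm : Lint n σ t * Lint n σ (t-1) = 1 ∨ Lint n σ t * Lint n σ (t-1) = -1 := by
      rcases Lint_pm n σ hσ.1 t with h | h <;> rcases Lint_pm n σ hσ.1 (t-1) with h2 | h2 <;>
        rw [h, h2] <;> norm_num
    constructor
    · rintro ⟨h1, h2⟩
      refine ⟨h1, fun _ h3 => ?_⟩
      rw [he] at h2
      linarith
    · rintro ⟨h1, h3⟩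
      have h4 := h3 h1
      refine ⟨h1, ?_⟩
      rw [he]
      rcases hpm with h | h
      · rw [h] at h4 ⊢
        norm_num
      · exact absurd (by rw [h]; norm_num) h4
  rw [hcompl, Finset.card_sdiff_of_subset (Finset.filter_subset _ _), changes_eq n σ] at hcore
  have hIco : (Finset.Ico (0:ℤ) (2*(n:ℤ))).card = 2*n := by
    rw [Int.card_Ico]
    omega
  have hle : 2 * cyclicN n σ ≤ (Finset.Ico (0:ℤ) (2*(n:ℤ))).card := by
    rw [← changes_eq n σ]
    exact Finset.card_filter_le _ _
  rw [hIco] at hcore hle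
  omega

end Stmt11Aux

namespace Stmt11Aux
open Complex

variable (n : ℕ) [NeZero n]

noncomputable def Esub (k : ℕ) : Submodule ℝ (Fin n → ℝ) :=
  Submodule.span ℝ {uvec n k, wvec n k}

lemma delta_shift (x : Fin n → ℝ) (i : Fin n) :
    cyclicDelta n i * x (i - 1) = Lint n x (((i:ℕ):ℤ) - 1) := by
  have hn : 0 < n := npos n
  by_cases h0 : i = 0
  · subst h0
    have e0 : (((0:Fin n):ℕ):ℤ) = 0 := by simp
    rw [e0]
    have h1 : Lint n x ((0:ℤ) - 1) = - Lint n x ((n:ℤ) - 1) := by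
      rw [show (0:ℤ) - 1 = ((n:ℤ) - 1) - n by ring]
      exact Lint_sub_n n x _
    have h2 : Lint n x ((n:ℤ) - 1) = x (0 - 1) := by
      rw [Lint_of_lt n x _ (by omega) (by omega)]
      congr 1
      push_cast
      simp
    rw [h1, h2, cyclicDelta, if_pos rfl]
    ring
  · have hi1 : 1 ≤ (i:ℕ) := Nat.one_le_iff_ne_zero.2 fun h => h0 (Fin.ext h)
    have hiI : ((i:ℕ):ℤ) < n := by exact_mod_cast i.isLt
    have h2 : Lint n x (((i:ℕ):ℤ) - 1) = x (i - 1) := by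
      rw [Lint_of_lt n x _ (by omega) (by omega)]
      congr 1
      have e : ((((i:ℕ):ℤ) - 1 : ℤ) : Fin n) = (((i:ℕ):ℤ) : Fin n) - 1 := by push_cast; ring
      rw [e, coe_cast_fin]
    rw [h2, cyclicDelta, if_neg h0]
    ring

lemma Amat_mulVec (x : Fin n → ℝ) (i : Fin n) :
    (Amat n).mulVec x i = cyclicDelta n i * x (i - 1) := by
  classical
  unfold Amat Matrix.mulVec dotProduct
  have h : ∀ j : Fin n, (if j = i - 1 then cyclicDelta n i else 0) * x j
      = if j = i - 1 then cyclicDelta n i * x j else 0 := by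
    intro j; split <;> simp
  rw [Finset.sum_congr rfl fun j _ => h j, Finset.sum_ite_eq' Finset.univ (i-1)
    (fun j => cyclicDelta n i * x j), if_pos (Finset.mem_univ _)]

lemma Amat_uvec (k : ℕ) :
    (Amat n).mulVec (uvec n k) = Real.cos (Real.pi * (2*k+1) / n) • uvec n k
      + Real.sin (Real.pi * (2*k+1) / n) • wvec n k := by
  funext i
  rw [Pi.add_apply, Pi.smul_apply, Pi.smul_apply, smul_eq_mul, smul_eq_mul,
    Amat_mulVec, delta_shift, (Lint_trig n k _).1]
  unfold uvec wvec
  rw [show Real.pi * (2*(k:ℝ)+1) / n * ((((i:ℕ):ℤ) - 1 : ℤ) : ℝ)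
      = Real.pi * (2*(k:ℝ)+1) / n * ((i:ℕ):ℝ) - Real.pi * (2*(k:ℝ)+1) / n by push_cast; ring,
    Real.cos_sub]
  ring

lemma Amat_wvec (k : ℕ) :
    (Amat n).mulVec (wvec n k) = Real.cos (Real.pi * (2*k+1) / n) • wvec n k
      - Real.sin (Real.pi * (2*k+1) / n) • uvec n k := by
  funext i
  rw [Pi.sub_apply, Pi.smul_apply, Pi.smul_apply, smul_eq_mul, smul_eq_mul,
    Amat_mulVec, delta_shift, (Lint_trig n k _).2]
  unfold uvec wvec
  rw [show Real.pi * (2*(k:ℝ)+1) / n * ((((i:ℕ):ℤ) - 1 : ℤ) : ℝ)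
      = Real.pi * (2*(k:ℝ)+1) / n * ((i:ℕ):ℝ) - Real.pi * (2*(k:ℝ)+1) / n by push_cast; ring,
    Real.sin_sub]
  ring

lemma Esub_invariant (k : ℕ) (x : Fin n → ℝ) (hx : x ∈ Esub n k) :
    (Amat n).mulVec x ∈ Esub n k := by
  obtain ⟨a, b, rfl⟩ := Submodule.mem_span_pair.1 hx
  rw [Matrix.mulVec_add, Matrix.mulVec_smul, Matrix.mulVec_smul, Amat_uvec, Amat_wvec]
  apply Submodule.mem_span_pair.2
  refine ⟨a * Real.cos (Real.pi * (2*k+1) / n) - b * Real.sin (Real.pi * (2*k+1) / n),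
    a * Real.sin (Real.pi * (2*k+1) / n) + b * Real.cos (Real.pi * (2*k+1) / n), ?_⟩
  module

lemma uvec_zero (k : ℕ) : uvec n k ⟨0, npos n⟩ = 1 := by
  unfold uvec
  norm_num

lemma finrank_Esub_two (hn2 : 2 ≤ n) (k : ℕ) (hk : 2*k+1 < n) :
    Module.finrank ℝ (Esub n k) = 2 := by
  have hn : 0 < n := npos n
  have hθpos : 0 < Real.pi * (2*(k:ℝ)+1) / n := by positivity
  have hθlt : Real.pi * (2*(k:ℝ)+1) / n < Real.pi := by
    rw [div_lt_iff₀ (by positivity : (0:ℝ) < (n:ℝ))]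
    have : (2*(k:ℝ)+1) < n := by exact_mod_cast hk
    nlinarith [Real.pi_pos]
  have hsin : 0 < Real.sin (Real.pi * (2*(k:ℝ)+1) / n) := Real.sin_pos_of_pos_of_lt_pi hθpos hθlt
  have hli : LinearIndependent ℝ ![uvec n k, wvec n k] := by
    rw [LinearIndependent.pair_iff]
    intro s t hst
    have h0 := congrFun hst ⟨0, hn⟩
    have h1 := congrFun hst ⟨1, by omega⟩
    simp only [Pi.add_apply, Pi.smul_apply, smul_eq_mul, Pi.zero_apply] at h0 h1
    unfold uvec wvec at h0 h1
    norm_num at h0 h1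
    constructor
    · exact h0
    · rw [h0] at h1
      norm_num at h1
      rcases h1 with h | h
      · exact h
      · exact absurd h hsin.ne'
  have hr : Set.range ![uvec n k, wvec n k] = {uvec n k, wvec n k} := by
    ext y
    simp [Fin.exists_fin_two]
    tauto
  have := finrank_span_eq_card hli
  rw [hr] at this
  rw [Esub, this]
  simp

lemma wvec_eq_zero (k : ℕ) (hk : 2*k+1 = n) : wvec n k = 0 := by
  funext i
  unfold wvec
  have : Real.pi * (2*(k:ℝ)+1) / n = Real.pi := by
    have h : (2*(k:ℝ)+1) = (n:ℝ) := by exact_mod_cast hk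
    rw [h]
    field_simp
    exact div_self (by exact_mod_cast (npos n).ne')
  rw [this, show Real.pi * ((i:ℕ):ℝ) = ((i:ℕ):ℤ) * Real.pi by push_cast; ring]
  · exact Real.sin_int_mul_pi _
  
lemma finrank_Esub_one (k : ℕ) (hk : 2*k+1 = n) :
    Module.finrank ℝ (Esub n k) = 1 := by
  have hn : 0 < n := npos n
  have hune : uvec n k ≠ 0 := by
    intro h
    have := congrFun h ⟨0, hn⟩
    rw [uvec_zero] at this
    simp at this
  rw [Esub, wvec_eq_zero n k hk, Set.pair_comm, Submodule.span_insert_zero]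
  exact finrank_span_singleton hune

end Stmt11Aux

namespace Stmt11Aux
open Complex

variable (n : ℕ) [NeZero n]

lemma not_dvd_helper (s : ℤ) (h1 : s ≠ 0) (h2 : |s| < 2*(n:ℤ)) : ¬ (2*(n:ℤ)) ∣ s := by
  intro hdvd
  have := Int.le_of_dvd (abs_pos.2 h1) ((dvd_abs _ _).2 hdvd)
  linarith

lemma Esub_le_inf (i j k : ℕ) (hik : i ≤ k) (hkj : k ≤ j) (hjn : 2*j+1 ≤ n) :
    Esub n k ≤ Omod n {μ : ℤ | |μ| < (2*(i:ℤ)+1)}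
      ⊓ Omod n {μ : ℤ | |μ - (n:ℤ)| < ((n - (2*j+1) : ℕ) : ℤ)} := by
  have hn : 0 < n := npos n
  have hd : ((n - (2*j+1) : ℕ) : ℤ) = (n:ℤ) - (2*j+1) := by
    push_cast [Nat.cast_sub hjn]
    ring
  have hdiv1 : ∀ μ ∈ {μ : ℤ | |μ| < (2*(i:ℤ)+1)},
      ¬ (2*(n:ℤ)) ∣ (μ + (2*(k:ℤ)+1)) ∧ ¬ (2*(n:ℤ)) ∣ (μ - (2*(k:ℤ)+1)) := by
    intro μ hμ
    simp only [Set.mem_setOf_eq, abs_lt] at hμ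
    have hik' : (i:ℤ) ≤ k := by exact_mod_cast hik
    have hkj' : (k:ℤ) ≤ j := by exact_mod_cast hkj
    have hjn' : 2*(j:ℤ)+1 ≤ n := by exact_mod_cast hjn
    constructor
    · apply not_dvd_helper n _ (by omega) (by rw [abs_lt]; omega)
    · apply not_dvd_helper n _ (by omega) (by rw [abs_lt]; omega)
  have hdiv2 : ∀ μ ∈ {μ : ℤ | |μ - (n:ℤ)| < ((n - (2*j+1) : ℕ) : ℤ)},
      ¬ (2*(n:ℤ)) ∣ (μ + (2*(k:ℤ)+1)) ∧ ¬ (2*(n:ℤ)) ∣ (μ - (2*(k:ℤ)+1)) := by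
    intro μ hμ
    simp only [Set.mem_setOf_eq, hd, abs_lt] at hμ
    have hik' : (i:ℤ) ≤ k := by exact_mod_cast hik
    have hkj' : (k:ℤ) ≤ j := by exact_mod_cast hkj
    have hjn' : 2*(j:ℤ)+1 ≤ n := by exact_mod_cast hjn
    constructor
    · apply not_dvd_helper n _ (by omega) (by rw [abs_lt]; omega)
    · apply not_dvd_helper n _ (by omega) (by rw [abs_lt]; omega)
  obtain ⟨hu1, hw1⟩ := trig_mem_Omod n k _ hdiv1
  obtain ⟨hu2, hw2⟩ := trig_mem_Omod n k _ hdiv2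
  rw [Esub, Submodule.span_le]
  rintro x hx
  rcases Set.mem_insert_iff.1 hx with rfl | hx
  · exact Submodule.mem_inf.2 ⟨hu1, hu2⟩
  · rw [Set.mem_singleton_iff.1 hx]
    exact Submodule.mem_inf.2 ⟨hw1, hw2⟩

lemma bounds_of_mem (i j : ℕ) (hjn : 2*j+1 ≤ n) (ξ : Fin n → ℝ)
    (h1 : ξ ∈ Omod n {μ : ℤ | |μ| < (2*(i:ℤ)+1)})
    (h2 : ξ ∈ Omod n {μ : ℤ | |μ - (n:ℤ)| < ((n - (2*j+1) : ℕ) : ℤ)})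
    (hne : ξ ≠ 0) (σ : Fin n → ℝ) (hσ : σ ∈ compl' n ξ) :
    2*i+1 ≤ cyclicN n σ ∧ cyclicN n σ ≤ 2*j+1 := by
  have he : {μ : ℤ | |μ| < ((2*i+1 : ℕ):ℤ)} = {μ : ℤ | |μ| < (2*(i:ℤ)+1)} := by
    ext μ
    have : ((2*i+1 : ℕ):ℤ) = 2*(i:ℤ)+1 := by push_cast; ring
    rw [this]
  have hLB := LB n (2*i+1) ξ (by rw [he]; exact h1) hne σ hσ
  have hUB := UB n (n - (2*j+1)) ξ (by convert h2 using 2) hne σ hσ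
  omega

end Stmt11Aux


open Stmt11Aux in
/-- There are `(ñ+1)/2` `A`-invariant subspaces `E_k`, of
dimension `2` except the last one which has dimension `2` if `n` is even and
`1` if `n` is odd, such that every nonzero `ξ ∈ E_k` lies in `𝒩` with
`N(ξ) = 2k − 1`; moreover for `i ≤ j`, every nonzero vector of
`W_{i,j} = E_i ⊕ ⋯ ⊕ E_j` satisfies `2i − 1 ≤ N_m ≤ N_M ≤ 2j − 1`
(here `k : Fin ((ñ+1)/2)` corresponds to the paper's index `k.val + 1`). -/
theorem stmt11 (n : ℕ) [NeZero n] (hn : 2 ≤ n) :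
    ∃ E : Fin ((ntilde n + 1) / 2) → Submodule ℝ (Fin n → ℝ),
      (∀ k, Module.finrank ℝ (E k) =
        if (k : ℕ) + 1 = (ntilde n + 1) / 2 then (if n % 2 = 1 then 1 else 2)
        else 2) ∧
      (∀ k, ∀ x ∈ E k, (Amat n).mulVec x ∈ E k) ∧
      (∀ k, ∀ ξ ∈ E k, ξ ≠ 0 →
        ξ ∈ cyclicGood n ∧ cyclicNm n ξ = 2 * (k : ℕ) + 1) ∧
      (∀ i j : Fin ((ntilde n + 1) / 2), i ≤ j →
        ∀ ξ ∈ (⨆ k ∈ Set.Icc i j, E k), ξ ≠ 0 →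
          2 * (i : ℕ) + 1 ≤ cyclicNm n ξ ∧ cyclicNM n ξ ≤ 2 * (j : ℕ) + 1) := by
  classical
  have hn0 : 0 < n := by omega
  set m := (ntilde n + 1) / 2 with hm
  have hnt1 : ntilde n % 2 = 1 := by
    rw [ntilde]
    rcases Nat.mod_two_eq_zero_or_one n with h | h
    · rw [if_neg (by omega)]
      omega
    · rw [if_pos h]
      omega
  have hntn : ntilde n ≤ n := by
    rw [ntilde]; split <;> omega
  have hmval : 2 * m = ntilde n + 1 := by omega
  refine ⟨fun k => Esub n (k:ℕ), ?_, ?_, ?_, ?_⟩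
  · intro k
    have hk1 : (k:ℕ) + 1 ≤ m := k.isLt
    by_cases hcase : (k:ℕ) + 1 = m
    · rw [if_pos hcase]
      rcases Nat.mod_two_eq_zero_or_one n with hpar | hpar
      · rw [if_neg (by omega)]
        apply finrank_Esub_two n hn
        have hnt : ntilde n = n - 1 := by rw [ntilde, if_neg (by omega)]
        omega
      · rw [if_pos hpar]
        apply finrank_Esub_one
        have hnt : ntilde n = n := by rw [ntilde, if_pos hpar]
        omega
    · rw [if_neg hcase]
      apply finrank_Esub_two n hn
      omega
  · intro k x hx
    exact Esub_invariant n (k:ℕ) x hx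
  · intro k ξ hξ hne
    have h2k1 : 2*(k:ℕ)+1 ≤ n := by
      have hk1 : (k:ℕ) + 1 ≤ m := k.isLt
      omega
    obtain ⟨h1, h2⟩ := Submodule.mem_inf.1
      (Esub_le_inf n (k:ℕ) (k:ℕ) (k:ℕ) le_rfl le_rfl h2k1 hξ)
    have hall : ∀ σ ∈ compl' n ξ, cyclicN n σ = 2*(k:ℕ)+1 := by
      intro σ hσ
      have := bounds_of_mem n (k:ℕ) (k:ℕ) h2k1 ξ h1 h2 hne σ hσ
      omega
    have hset : {k' | ∃ᶠ y in nhdsWithin ξ (cyclicLambda n), cyclicN n y = k'}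
        = {2*(k:ℕ)+1} := by
      rw [freq_set_eq]
      apply Set.eq_singleton_iff_nonempty_unique_mem.2
      refine ⟨(compl'_nonempty n ξ).image _, ?_⟩
      rintro x ⟨σ, hσ, rfl⟩
      exact hall σ hσ
    constructor
    · show cyclicNm n ξ = cyclicNM n ξ
      rw [cyclicNm, cyclicNM, hset, csInf_singleton, csSup_singleton]
    · rw [cyclicNm, hset, csInf_singleton]
  · intro i j hij ξ hξW hne
    have hj1 : (j:ℕ) + 1 ≤ m := j.isLt
    have h2j1 : 2*(j:ℕ)+1 ≤ n := by omega
    have hWle : (⨆ k ∈ Set.Icc i j, Esub n (k:ℕ)) ≤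
        Omod n {μ : ℤ | |μ| < (2*((i:ℕ):ℤ)+1)}
          ⊓ Omod n {μ : ℤ | |μ - (n:ℤ)| < ((n - (2*(j:ℕ)+1) : ℕ) : ℤ)} := by
      refine iSup₂_le fun k hk => ?_
      obtain ⟨hik, hkj⟩ := Set.mem_Icc.1 hk
      exact Esub_le_inf n (i:ℕ) (j:ℕ) (k:ℕ) hik hkj h2j1
    obtain ⟨h1, h2⟩ := Submodule.mem_inf.1 (hWle hξW)
    have hall := fun σ hσ => bounds_of_mem n (i:ℕ) (j:ℕ) h2j1 ξ h1 h2 hne σ hσ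
    constructor
    · rw [cyclicNm, freq_set_eq]
      apply le_csInf ((compl'_nonempty n ξ).image _)
      rintro b ⟨σ, hσ, rfl⟩
      exact (hall σ hσ).1
    · rw [cyclicNM, freq_set_eq]
      apply csSup_le ((compl'_nonempty n ξ).image _)
      rintro b ⟨σ, hσ, rfl⟩
      exact (hall σ hσ).2
end

section
/- Let x(t) be the solution of the linear cyclic negative feedback system whose initial value x(0) satisfies x₁(0) ≠ 0 and xᵢ(0) = 0 for i = 2, …, n. Then for each 2 ≤ i ≤ n, as t → 0, xᵢ(t) = (∏_{j=2}^{i} a_{j,j−1}(0)) · x₁(0) · t^{i−1}/(i−1)! + o(t^{i−1}). -/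
open Filter Topology

lemma aux17 {n : ℕ} [NeZero n] (S : LinCNF n) (x : ℝ → Fin n → ℝ)
    (hsol : S.IsSolution x) (h0 : ∀ i : Fin n, i ≠ 0 → x 0 i = 0) :
    ∀ m : ℕ, ∀ i : Fin n, i.val = m → ∀ l ≤ m,
      Tendsto (fun t : ℝ => x t i / t ^ l) (𝓝[≠] (0:ℝ))
        (𝓝 (if l = m then
          (∏ k ∈ Finset.Icc 1 m, S.sub 0 (@Nat.cast (Fin n) (Fin.NatCast.instNatCast n) k)) * x 0 0 / m.factorial else 0)) := by
  intro m
  induction m with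
  | zero =>
    intro i hi l hl
    have hi0 : i = 0 := Fin.ext hi
    interval_cases l
    simp only [if_pos rfl, pow_zero, div_one, hi0]
    have : Tendsto (fun t => x t 0) (𝓝 (0:ℝ)) (𝓝 (x 0 0)) := (hsol 0 0).continuousAt
    simpa using this.mono_left nhdsWithin_le_nhds
  | succ m ih =>
    intro i hi l hl
    have hine : i ≠ 0 := by
      intro h; rw [h] at hi; simp at hi
    have hn2 : 1 < n := by have := i.isLt; omega
    have h1v : ((1 : Fin n) : ℕ) = 1 := by rw [Fin.val_one']; exact Nat.mod_eq_of_lt hn2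
    have hj : (i - 1).val = m := by
      have hle : (1 : Fin n) ≤ i := by rw [Fin.le_def, h1v]; omega
      have := Fin.coe_sub_iff_le.2 hle
      omega
    induction l with
    | zero =>
      rw [if_neg (by omega)]
      have : Tendsto (fun t => x t i) (𝓝 (0:ℝ)) (𝓝 (x 0 i)) := (hsol 0 i).continuousAt
      rw [h0 i hine] at this
      simpa using this.mono_left nhdsWithin_le_nhds
    | succ l ihl =>
      have hlm : l ≤ m := by omega
      have hxi : Tendsto (fun t : ℝ => x t i / t ^ l) (𝓝[≠] (0:ℝ)) (𝓝 0) := by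
        have := ihl (by omega)
        rwa [if_neg (by omega)] at this
      have hxj := ih (i - 1) hj l hlm
      -- L'Hôpital
      have hG : ∀ t : ℝ, HasDerivAt (fun s : ℝ => s ^ (l+1)) ((l+1 : ℝ) * t ^ l) t := by
        intro t
        simpa using hasDerivAt_pow (l+1) t
      have hdiag : Tendsto (fun t => S.diag t i) (𝓝[≠] (0:ℝ)) (𝓝 (S.diag 0 i)) :=
        ((S.cont_diag i).tendsto 0).mono_left nhdsWithin_le_nhds
      have hsub : Tendsto (fun t => S.sub t i) (𝓝[≠] (0:ℝ)) (𝓝 (S.sub 0 i)) :=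
        ((S.cont_sub i).tendsto 0).mono_left nhdsWithin_le_nhds
      set L : ℝ := (S.diag 0 i * 0 + S.sub 0 i * (if l = m then
          (∏ k ∈ Finset.Icc 1 m, S.sub 0 (@Nat.cast (Fin n) (Fin.NatCast.instNatCast n) k)) * x 0 0 / m.factorial else 0)) / (l+1 : ℝ)
        with hL
      have hdiv : Tendsto (fun t : ℝ =>
          (S.diag t i * x t i + S.sub t i * x t (i-1)) / ((l+1 : ℝ) * t ^ l))
          (𝓝[≠] (0:ℝ)) (𝓝 L) := by
        have key : Tendsto (fun t : ℝ =>
            (S.diag t i * (x t i / t ^ l) + S.sub t i * (x t (i-1) / t ^ l)) / (l+1 : ℝ))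
            (𝓝[≠] (0:ℝ)) (𝓝 L) := by
          rw [hL]
          exact ((hdiag.mul hxi).add (hsub.mul hxj)).div_const _
        refine key.congr' ?_
        filter_upwards [self_mem_nhdsWithin] with t ht
        have ht' : t ≠ 0 := ht
        show _ = _ / _
        rw [← mul_div_assoc, ← mul_div_assoc, ← add_div, div_div, mul_comm (t ^ l)]
      have hmain : Tendsto (fun t : ℝ => x t i / t ^ (l+1)) (𝓝[≠] (0:ℝ)) (𝓝 L) := by
        apply HasDerivAt.lhopital_zero_nhdsNE
          (f' := fun t => S.diag t i * x t i + S.sub t i * x t (i-1))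
          (g' := fun t => (l+1 : ℝ) * t ^ l)
        · exact Eventually.of_forall fun t => hsol t i
        · exact Eventually.of_forall fun t => hG t
        · filter_upwards [self_mem_nhdsWithin] with t ht
          have ht' : t ≠ 0 := ht
          exact mul_ne_zero (by positivity) (pow_ne_zero _ ht')
        · have : Tendsto (fun t => x t i) (𝓝 (0:ℝ)) (𝓝 (x 0 i)) := (hsol 0 i).continuousAt
          rw [h0 i hine] at this
          exact this.mono_left nhdsWithin_le_nhds
        · have : Tendsto (fun t : ℝ => t ^ (l+1)) (𝓝 (0:ℝ)) (𝓝 ((0:ℝ) ^ (l+1))) :=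
            (continuous_pow (l+1)).tendsto 0
          simpa using this.mono_left nhdsWithin_le_nhds
        · exact hdiv
      convert hmain using 2
      rw [hL]
      by_cases hcase : l = m
      · subst hcase
        rw [if_pos rfl, if_pos rfl]
        have hcast : (@Nat.cast (Fin n) (Fin.NatCast.instNatCast n) (l + 1)) = i := by
          rw [← hi, Fin.cast_val_eq_self]
        rw [Finset.prod_Icc_succ_top (by omega), hcast, Nat.factorial_succ]
        have h1 : (l.factorial : ℝ) ≠ 0 := Nat.cast_ne_zero.mpr l.factorial_ne_zero
        push_cast
        field_simp
        ring
      · rw [if_neg hcase, if_neg (by omega)]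
        simp

/-- For the solution starting at `x(0) = (x₁(0), 0, …, 0)` with
`x₁(0) ≠ 0`, each component satisfies
`xᵢ(t) = (∏_{j=2}^{i} a_{j,j−1}(0)) x₁(0) t^{i−1}/(i−1)! + o(t^{i−1})` as `t → 0`
(in our 0-based indexing, index `i : Fin n` corresponds to the paper's `i+1`,
so the exponent is `i.val` and the product runs over `a_{k+1,k}(0)` for
`k = 1, …, i.val`). -/
theorem stmt17 (n : ℕ) [NeZero n] (hn : 2 ≤ n) (S : LinCNF n) (x : ℝ → Fin n → ℝ)
    (hsol : S.IsSolution x)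
    (h1 : x 0 (0 : Fin n) ≠ 0) (h0 : ∀ i : Fin n, i ≠ 0 → x 0 i = 0) :
    ∀ i : Fin n, i ≠ 0 →
      Tendsto (fun t : ℝ =>
          (x t i -
            (∏ k ∈ Finset.Icc 1 i.val, S.sub 0 (@Nat.cast (Fin n) (Fin.NatCast.instNatCast n) k)) * x 0 (0 : Fin n) *
              t ^ i.val / (Nat.factorial i.val)) / t ^ i.val)
        (𝓝[≠] (0 : ℝ)) (𝓝 0) := by
  intro i hine
  have hm := aux17 S x hsol h0 i.val i rfl i.val le_rfl
  rw [if_pos rfl] at hm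
  have h2 := hm.sub_const
      ((∏ k ∈ Finset.Icc 1 i.val, S.sub 0 (@Nat.cast (Fin n) (Fin.NatCast.instNatCast n) k)) * x 0 0 / i.val.factorial)
  rw [sub_self] at h2
  refine h2.congr' ?_
  filter_upwards [self_mem_nhdsWithin] with t ht
  have ht' : t ≠ 0 := ht
  have htm : t ^ i.val ≠ 0 := pow_ne_zero _ ht'
  have hf : (i.val.factorial : ℝ) ≠ 0 := Nat.cast_ne_zero.mpr i.val.factorial_ne_zero
  field_simp
end

section
/- Let x(t) be a nontrivial solution of the linear cyclic negative feedback system that is periodic, i.e., x(t + ω) = x(t) for all t ∈ ℝ for some ω > 0. Then x(t) ∈ 𝒩 for all t ∈ ℝ, and N(x(t)) is independent of t. -/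
open Filter Topology Set
open scoped NNReal

open Fin.NatCast Fin.CommRing

section aux

lemma delta_cases (n : ℕ) [NeZero n] (i : Fin n) :
    cyclicDelta n i = 1 ∨ cyclicDelta n i = -1 := by
  unfold cyclicDelta; split <;> simp

open scoped Classical in
lemma cyclicN_eq (n : ℕ) [NeZero n] (x : Fin n → ℝ) :
    cyclicN n x = (Finset.univ.filter fun i => cyclicDelta n i * x i * x (i - 1) < 0).card := by
  rw [cyclicN, Nat.card_eq_fintype_card, Fintype.card_subtype]

lemma mul_pos_trans {a b c : ℝ} (h1 : 0 < a * c) (h2 : 0 < b * c) : 0 < a * b := by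
  rcases mul_pos_iff.mp h1 with ⟨ha, hc⟩ | ⟨ha, hc⟩ <;>
  rcases mul_pos_iff.mp h2 with ⟨hb, hc'⟩ | ⟨hb, hc'⟩
  · exact mul_pos ha hb
  · exact absurd hc' (not_lt.mpr hc.le)
  · exact absurd hc (not_lt.mpr hc'.le)
  · exact mul_pos_of_neg_of_neg ha hb


lemma neg_iff_of_mul_pos {p q : ℝ} (h : 0 < p * q) : (p < 0 ↔ q < 0) := by
  rcases mul_pos_iff.mp h with ⟨hp, hq⟩ | ⟨hp, hq⟩ <;> constructor <;> intro <;> linarith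

lemma sign_prod_neg {d a a' b b' : ℝ} (h1 : 0 < d * a * a') (h2 : a * b < 0)
    (h3 : 0 < a' * b') : d * b * b' < 0 := by
  have ha : a ≠ 0 := fun h => by simp [h] at h2
  have ha' : a' ≠ 0 := by
    intro h; rw [h] at h3; simp at h3
  have k1 : (d * a * a') * (a * b) < 0 := mul_neg_of_pos_of_neg h1 h2
  have k2 : ((d * a * a') * (a * b)) * (a' * b') < 0 := mul_neg_of_neg_of_pos k1 h3
  have key : ((d * a * a') * (a * b)) * (a' * b') = (d * b * b') * (a ^ 2 * a' ^ 2) := by ring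
  rw [key] at k2
  have hpos : 0 < a ^ 2 * a' ^ 2 := by positivity
  by_contra hcon
  push_neg at hcon
  exact absurd (mul_nonneg hcon hpos.le) (not_le.mpr k2)

open scoped Classical in
lemma comb (n : ℕ) [NeZero n] (hn : 2 ≤ n) (δ z : Fin n → ℝ)
    (hδ : ∀ i, δ i = 1 ∨ δ i = -1) (i₀ : Fin n) (hz : z i₀ ≠ 0) :
    ∀ (k : ℕ) (y : Fin n → ℝ) (σ : Fin n → ℝ), (∀ i, σ i ≠ 0) → (∀ i, y i ≠ 0) →
    (∀ i, z i ≠ 0 → 0 < σ i * y i) →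
    (∀ i, z i = 0 → 0 < δ i * σ i * σ (i - 1)) →
    (Finset.univ.filter fun i => z i = 0 ∧ σ i * y i < 0).card = k →
    (Finset.univ.filter fun i => δ i * σ i * σ (i - 1) < 0).card ≤
      (Finset.univ.filter fun i => δ i * y i * y (i - 1) < 0).card := by
  intro k
  induction k with
  | zero =>
    intro y σ hσ hy hagree hfwd hcard
    have hall : ∀ i, 0 < σ i * y i := by
      intro i
      by_cases hzi : z i = 0
      · rcases lt_or_gt_of_ne (mul_ne_zero (hσ i) (hy i)) with h | h
        · exfalso
          have : i ∈ Finset.univ.filter fun i => z i = 0 ∧ σ i * y i < 0 := by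
            simp [hzi, h]
          rw [Finset.card_eq_zero] at hcard
          simp [hcard] at this
        · exact h
      · exact hagree i hzi
    have : ∀ i : Fin n, (δ i * σ i * σ (i - 1) < 0 ↔ δ i * y i * y (i - 1) < 0) := by
      intro i
      apply neg_iff_of_mul_pos
      have hδ2 : δ i * δ i = 1 := by rcases hδ i with h | h <;> rw [h] <;> norm_num
      have : (δ i * σ i * σ (i - 1)) * (δ i * y i * y (i - 1))
          = (δ i * δ i) * ((σ i * y i) * (σ (i - 1) * y (i - 1))) := by ring
      rw [this, hδ2, one_mul]
      exact mul_pos (hall i) (hall (i - 1))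
    rw [Finset.filter_congr (fun i _ => by rw [this i])]
  | succ k ih =>
    intro y σ hσ hy hagree hfwd hcard
    set M := Finset.univ.filter fun i => z i = 0 ∧ σ i * y i < 0 with hM
    have hMpred : (∃ j ∈ M, 0 < σ (j - 1) * y (j - 1)) := by
      by_contra hcon
      push_neg at hcon
      have hstep : ∀ j ∈ M, j - 1 ∈ M := by
        intro j hj
        have h1 : σ (j - 1) * y (j - 1) < 0 := by
          rcases lt_or_gt_of_ne (mul_ne_zero (hσ _) (hy _)) with h | h
          · exact h
          · exact absurd h (not_lt.mpr (hcon j hj))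
        have h2 : z (j - 1) = 0 := by
          by_contra hne
          exact absurd (hagree _ hne) (not_lt.mpr h1.le)
        simp only [hM, Finset.mem_filter, Finset.mem_univ, true_and]
        exact ⟨h2, h1⟩
      have hiter : ∀ (m : ℕ) (j : Fin n), j ∈ M → j - (m : Fin n) ∈ M := by
        intro m
        induction m with
        | zero => intro j hj; simpa using hj
        | succ m ihm =>
          intro j hj
          have heq : j - ((m : Fin n) + 1) = (j - (m : Fin n)) - 1 := by ring
          rw [Nat.cast_add, Nat.cast_one, heq]
          exact hstep _ (ihm j hj)
      have hMne : M.Nonempty := by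
        apply Finset.card_pos.mp; rw [hcard]; omega
      obtain ⟨j₀, hj₀⟩ := hMne
      have : i₀ ∈ M := by
        have := hiter ((j₀ - i₀ : Fin n).val) j₀ hj₀
        rwa [Fin.cast_val_eq_self, sub_sub_cancel] at this
      simp only [hM, Finset.mem_filter] at this
      exact hz this.2.1
    obtain ⟨j, hjM, hjpred⟩ := hMpred
    have hjM' := hjM
    simp only [hM, Finset.mem_filter, Finset.mem_univ, true_and] at hjM'
    obtain ⟨hzj, hmis⟩ := hjM'
    set y' := Function.update y j (-(y j)) with hy'
    have hy'j : y' j = -(y j) := Function.update_self j _ y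
    have hy'ne : ∀ i, i ≠ j → y' i = y i := fun i hi => Function.update_of_ne hi _ y
    have hy'nz : ∀ i, y' i ≠ 0 := by
      intro i
      by_cases hij : i = j
      · subst hij; rw [hy'j]; exact neg_ne_zero.mpr (hy i)
      · rw [hy'ne i hij]; exact hy i
    have hsub_ne : (j : Fin n) - 1 ≠ j := by
      intro h
      have h10 : (1 : Fin n) = 0 := sub_eq_self.mp h
      have hval : (1 : ℕ) % n = 0 := by
        conv_lhs => rw [← Fin.val_one' n]
        rw [h10, Fin.val_zero]
      rw [Nat.one_mod_eq_one.mpr (by omega)] at hval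
      exact one_ne_zero hval
    have hcard' : (Finset.univ.filter fun i => z i = 0 ∧ σ i * y' i < 0).card = k := by
      have hset : (Finset.univ.filter fun i => z i = 0 ∧ σ i * y' i < 0) = M.erase j := by
        ext i
        simp only [Finset.mem_filter, Finset.mem_univ, true_and, Finset.mem_erase, hM]
        by_cases hij : i = j
        · subst hij
          rw [hy'j]
          constructor
          · rintro ⟨-, hlt⟩
            exfalso
            have : 0 < σ i * y i := by nlinarith
            exact absurd hmis (not_lt.mpr this.le)
          · rintro ⟨h, -⟩; exact absurd rfl h
        · rw [hy'ne i hij]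
          tauto
      rw [hset, Finset.card_erase_of_mem hjM, hcard]
      omega
    have hagree' : ∀ i, z i ≠ 0 → 0 < σ i * y' i := by
      intro i hi
      have hij : i ≠ j := fun h => hi (h ▸ hzj)
      rw [hy'ne i hij]; exact hagree i hi
    have step1 := ih y' σ hσ hy'nz hagree' hfwd hcard'
    set A := Finset.univ.filter fun i => δ i * y i * y (i - 1) < 0 with hA
    set A' := Finset.univ.filter fun i => δ i * y' i * y' (i - 1) < 0 with hA'
    have hbrj : δ j * y j * y (j - 1) < 0 :=
      sign_prod_neg (hfwd j hzj) hmis hjpred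
    have hjA : j ∈ A := by
      simp only [hA, Finset.mem_filter, Finset.mem_univ, true_and]
      exact hbrj
    have hsubset : A' ⊆ (A.erase j) ∪ {j + 1} := by
      intro i hi
      simp only [hA', Finset.mem_filter, Finset.mem_univ, true_and] at hi
      rcases eq_or_ne i (j + 1) with h | hij1
      · exact Finset.mem_union_right _ (Finset.mem_singleton.mpr h)
      rcases eq_or_ne i j with h | hij
      · exfalso
        subst h
        rw [hy'j, hy'ne _ hsub_ne] at hi
        have : δ i * -y i * y (i - 1) = -(δ i * y i * y (i - 1)) := by ring
        rw [this] at hi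
        linarith
      · apply Finset.mem_union_left
        rw [Finset.mem_erase]
        refine ⟨hij, ?_⟩
        have hi1 : i - 1 ≠ j := by
          intro h
          apply hij1
          rw [← h]; ring
        rw [hy'ne i hij, hy'ne _ hi1] at hi
        simp only [hA, Finset.mem_filter, Finset.mem_univ, true_and]
        exact hi
    have hcardA : A'.card ≤ A.card := by
      calc A'.card ≤ ((A.erase j) ∪ {j + 1}).card := Finset.card_le_card hsubset
        _ ≤ (A.erase j).card + 1 := by
            refine le_trans (Finset.card_union_le _ _) ?_
            simp
        _ = (A.card - 1) + 1 := by rw [Finset.card_erase_of_mem hjA]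
        _ = A.card := Nat.succ_pred_eq_of_pos (Finset.card_pos.mpr ⟨j, hjA⟩)
    exact le_trans step1 hcardA

lemma delta_mul_sub_pos {n : ℕ} [NeZero n] (S : LinCNF n) (t : ℝ) (j : Fin n) :
    0 < cyclicDelta n j * S.sub t j := by
  unfold cyclicDelta
  split
  · rename_i h; subst h
    have := S.sub_neg t; nlinarith
  · rename_i h
    have := S.sub_pos t j h; nlinarith

lemma pos_cancel_sq {a c : ℝ} (hc : c ≠ 0) (h : 0 < a * c ^ 2) : 0 < a := by
  nlinarith [sq_nonneg c, pow_pos (abs_pos.mpr hc) 2]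

-- basic monotonicity consequence
lemma pos_on_Ioo_of_deriv_pos {f f' : ℝ → ℝ} {a b : ℝ}
    (hd : ∀ t, HasDerivAt f (f' t) t) (hpos : ∀ t ∈ Ioo a b, 0 < f' t) (h0 : f a = 0) :
    ∀ t ∈ Ioo a b, 0 < f t := by
  intro t ht
  have hcont : Continuous f := by
    rw [continuous_iff_continuousAt]; exact fun u => (hd u).continuousAt
  have hmono : StrictMonoOn f (Icc a t) := by
    apply strictMonoOn_of_deriv_pos (convex_Icc a t) hcont.continuousOn
    intro u hu
    rw [interior_Icc] at hu
    rw [(hd u).deriv]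
    exact hpos u ⟨hu.1, hu.2.trans ht.2⟩
  have := hmono ⟨le_refl a, ht.1.le⟩ ⟨ht.1.le, le_refl t⟩ ht.1
  rwa [h0] at this

lemma neg_on_Ioo_of_deriv_pos {f f' : ℝ → ℝ} {a b : ℝ}
    (hd : ∀ t, HasDerivAt f (f' t) t) (hpos : ∀ t ∈ Ioo a b, 0 < f' t) (h0 : f b = 0) :
    ∀ t ∈ Ioo a b, f t < 0 := by
  intro t ht
  have hcont : Continuous f := by
    rw [continuous_iff_continuousAt]; exact fun u => (hd u).continuousAt
  have hmono : StrictMonoOn f (Icc t b) := by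
    apply strictMonoOn_of_deriv_pos (convex_Icc t b) hcont.continuousOn
    intro u hu
    rw [interior_Icc] at hu
    rw [(hd u).deriv]
    exact hpos u ⟨ht.1.trans hu.1, hu.2⟩
  have := hmono ⟨le_refl t, ht.2.le⟩ ⟨ht.2.le, le_refl b⟩ ht.2
  rwa [h0] at this


lemma cyclicN_le (n : ℕ) [NeZero n] (w : Fin n → ℝ) : cyclicN n w ≤ n := by
  classical
  rw [cyclicN_eq]
  exact le_trans (Finset.card_filter_le _ _) (by simp)

open scoped Classical in
lemma delta_ne_zero (n : ℕ) [NeZero n] (i : Fin n) : cyclicDelta n i ≠ 0 := by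
  rcases delta_cases n i with h | h <;> rw [h] <;> norm_num

open scoped Classical in
lemma card_neg_delta (n : ℕ) [NeZero n] (w : Fin n → ℝ) (hw : ∀ i, w i ≠ 0) :
    (Finset.univ.filter fun i => (-(cyclicDelta n i)) * w i * w (i - 1) < 0).card
      = n - (Finset.univ.filter fun i => cyclicDelta n i * w i * w (i - 1) < 0).card := by
  have hne : ∀ i : Fin n, cyclicDelta n i * w i * w (i - 1) ≠ 0 := fun i =>
    mul_ne_zero (mul_ne_zero (delta_ne_zero n i) (hw i)) (hw _)
  have hset : (Finset.univ.filter fun i => (-(cyclicDelta n i)) * w i * w (i - 1) < 0)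
      = Finset.univ.filter fun i => ¬(cyclicDelta n i * w i * w (i - 1) < 0) := by
    apply Finset.filter_congr
    intro i _
    have hkey : (-(cyclicDelta n i)) * w i * w (i - 1) = -(cyclicDelta n i * w i * w (i - 1)) := by
      ring
    rw [hkey, neg_lt_zero]
    rcases lt_or_gt_of_ne (hne i) with h | h
    · constructor
      · intro hp; linarith
      · intro hp; exact absurd h hp
    · constructor
      · intro _; exact not_lt.mpr h.le
      · intro _; exact h
  rw [hset, Finset.filter_not, Finset.card_sdiff_of_subset (Finset.filter_subset _ _)]
  simp

open scoped Classical in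
lemma cyclicN_congr (n : ℕ) [NeZero n] {y w : Fin n → ℝ} (h : ∀ i, 0 < y i * w i) :
    cyclicN n y = cyclicN n w := by
  rw [cyclicN_eq, cyclicN_eq]
  congr 1
  apply Finset.filter_congr
  intro i _
  apply neg_iff_of_mul_pos
  have hδ2 : cyclicDelta n i * cyclicDelta n i = 1 := by
    rcases delta_cases n i with h' | h' <;> rw [h'] <;> norm_num
  have key : (cyclicDelta n i * y i * y (i - 1)) * (cyclicDelta n i * w i * w (i - 1))
      = (cyclicDelta n i * cyclicDelta n i) * ((y i * w i) * (y (i - 1) * w (i - 1))) := by ring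
  rw [key, hδ2, one_mul]
  exact mul_pos (h i) (h (i - 1))

lemma lambda_eventually_agree (n : ℕ) [NeZero n] (w : Fin n → ℝ) :
    ∀ᶠ y in 𝓝 w, ∀ i, w i ≠ 0 → 0 < y i * w i := by
  rw [eventually_all]
  intro i
  by_cases h0 : w i = 0
  · filter_upwards with y hy; exact absurd h0 hy
  · have hc : ContinuousAt (fun y : Fin n → ℝ => y i * w i) w :=
      ((continuous_apply i).continuousAt).mul continuousAt_const
    have hpos : (0:ℝ) < w i * w i := mul_self_pos.mpr h0
    filter_upwards [hc.eventually (eventually_gt_nhds hpos)] with y hy _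
    exact hy

lemma good_on_lambda (n : ℕ) [NeZero n] {w : Fin n → ℝ} (hw : w ∈ cyclicLambda n) :
    cyclicNm n w = cyclicN n w ∧ cyclicNM n w = cyclicN n w := by
  have hev : ∀ᶠ y in 𝓝 w, ∀ i, 0 < y i * w i := by
    have := lambda_eventually_agree n w
    filter_upwards [this] with y hy i
    exact hy i (hw i)
  have hevN : ∀ᶠ y in 𝓝[cyclicLambda n] w, cyclicN n y = cyclicN n w := by
    filter_upwards [hev.filter_mono nhdsWithin_le_nhds] with y hy
    exact cyclicN_congr n hy
  have hne : (𝓝[cyclicLambda n] w).NeBot := neBot_of_le (pure_le_nhdsWithin hw)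
  have hset : {k | ∃ᶠ y in 𝓝[cyclicLambda n] w, cyclicN n y = k} = {cyclicN n w} := by
    apply Set.eq_singleton_iff_unique_mem.mpr
    constructor
    · exact hevN.frequently
    · intro k hk
      obtain ⟨y, hy1, hy2⟩ := (hk.and_eventually hevN).exists
      rw [← hy1, hy2]
  constructor
  · rw [cyclicNm, hset, csInf_singleton]
  · rw [cyclicNM, hset, csSup_singleton]

section main
variable {n : ℕ} [NeZero n] (S : LinCNF n) (x : ℝ → Fin n → ℝ) (hsol : S.IsSolution x)

-- one-sided sign propagation, right
include hsol in
lemma component_sign (j : Fin n) (t₀ : ℝ) (hx0 : x t₀ j = 0) (σ : ℝ) :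
    ∀ a b : ℝ, (∀ t ∈ Ioo a b, 0 < σ * x t (j - 1)) →
    ((t₀ = a → ∀ t ∈ Ioo a b, 0 < (cyclicDelta n j * σ) * x t j) ∧
     (t₀ = b → ∀ t ∈ Ioo a b, (cyclicDelta n j * σ) * x t j < 0)) := by
  intro a b hσ
  set c := cyclicDelta n j * σ with hc
  set A : ℝ → ℝ := fun t => ∫ s in t₀..t, S.diag s j with hA
  have hA' : ∀ t, HasDerivAt A (S.diag t j) t := fun t =>
    ((S.cont_diag j).integral_hasStrictDerivAt t₀ t).hasDerivAt
  set G : ℝ → ℝ := fun t => c * (Real.exp (-A t) * x t j) with hG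
  have hG' : ∀ t, HasDerivAt G (c * (Real.exp (-A t) * (S.sub t j * x t (j - 1)))) t := by
    intro t
    have h1 : HasDerivAt (fun t => Real.exp (-A t)) (-S.diag t j * Real.exp (-A t)) t := by
      have := ((hA' t).neg).exp
      convert this using 1
      · rfl
      · simp only [Pi.neg_apply]; ring
    have h2 := (h1.mul (hsol t j))
    have := h2.const_mul c
    refine this.congr_deriv ?_
    ring
  have hGpos : ∀ t ∈ Ioo a b, 0 < c * (Real.exp (-A t) * (S.sub t j * x t (j - 1))) := by
    intro t ht
    have key : c * (Real.exp (-A t) * (S.sub t j * x t (j - 1)))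
        = Real.exp (-A t) * ((cyclicDelta n j * S.sub t j) * (σ * x t (j - 1))) := by
      rw [hc]; ring
    rw [key]
    exact mul_pos (Real.exp_pos _) (mul_pos (delta_mul_sub_pos S t j) (hσ t ht))
  have hfact : ∀ t, c * x t j = Real.exp (A t) * G t := by
    intro t
    show c * x t j = Real.exp (A t) * (c * (Real.exp (-A t) * x t j))
    rw [show Real.exp (A t) * (c * (Real.exp (-A t) * x t j))
        = (Real.exp (A t) * Real.exp (-A t)) * (c * x t j) from by ring,
      ← Real.exp_add, add_neg_cancel, Real.exp_zero, one_mul]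
  constructor
  · intro hta
    intro t ht
    have hG0 : G a = 0 := by
      show c * (Real.exp (-A a) * x a j) = 0
      rw [← hta, hx0]; ring
    have := pos_on_Ioo_of_deriv_pos hG' hGpos hG0 t ht
    have h2 : 0 < Real.exp (A t) * G t := mul_pos (Real.exp_pos _) this
    rwa [← hfact] at h2
  · intro htb
    intro t ht
    have hG0 : G b = 0 := by
      show c * (Real.exp (-A b) * x b j) = 0
      rw [← htb, hx0]; ring
    have := neg_on_Ioo_of_deriv_pos hG' hGpos hG0 t ht
    have h2 : Real.exp (A t) * G t < 0 := mul_neg_of_pos_of_neg (Real.exp_pos _) this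
    rwa [← hfact] at h2


lemma ne_zero_of_mul_pos {a b : ℝ} (h : 0 < a * b) : b ≠ 0 := by
  intro hb; rw [hb, mul_zero] at h; exact lt_irrefl _ h

include hsol in
lemma local_structure (t₀ : ℝ) (i₀ : Fin n) (hi₀ : x t₀ i₀ ≠ 0) :
    ∃ ε > 0,
      (∀ t ∈ Ioo t₀ (t₀ + ε), ∀ i : Fin n, x t i ≠ 0 ∧
        (x t₀ i ≠ 0 → 0 < x t₀ i * x t i) ∧
        (x t₀ i = 0 → 0 < cyclicDelta n i * x t i * x t (i - 1))) ∧
      (∀ t ∈ Ioo (t₀ - ε) t₀, ∀ i : Fin n, x t i ≠ 0 ∧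
        (x t₀ i ≠ 0 → 0 < x t₀ i * x t i) ∧
        (x t₀ i = 0 → cyclicDelta n i * x t i * x t (i - 1) < 0)) := by
  have hcont : ∀ i : Fin n, Continuous fun t => x t i := by
    intro i
    rw [continuous_iff_continuousAt]; exact fun u => (hsol u i).continuousAt
  -- the basic continuity step for a coordinate which is nonzero at t₀
  have cont_step : ∀ j : Fin n, x t₀ j ≠ 0 → ∃ ε > 0,
      ∀ t, |t - t₀| < ε → 0 < x t₀ j * x t j := by
    intro j hj
    have hev : ∀ᶠ t in 𝓝 t₀, 0 < x t₀ j * x t j := by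
      have hc : ContinuousAt (fun t => x t₀ j * x t j) t₀ :=
        (continuousAt_const.mul (hcont j).continuousAt)
      have hval : 0 < x t₀ j * x t₀ j := mul_self_pos.mpr hj
      exact hc.eventually (eventually_gt_nhds hval) |>.mono (fun t ht => ht)
    obtain ⟨ε, hε, hball⟩ := Metric.eventually_nhds_iff.mp hev
    exact ⟨ε, hε, fun t ht => hball (by simpa [Real.dist_eq] using ht)⟩
  -- main induction
  have key : ∀ m : ℕ, ∃ ε > 0, ∃ sp sm : ℝ, sp ≠ 0 ∧ sm ≠ 0 ∧
      (∀ t ∈ Ioo t₀ (t₀ + ε), 0 < sp * x t (i₀ + (m : Fin n))) ∧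
      (∀ t ∈ Ioo (t₀ - ε) t₀, 0 < sm * x t (i₀ + (m : Fin n))) ∧
      (x t₀ (i₀ + (m : Fin n)) ≠ 0 → sp = x t₀ (i₀ + (m : Fin n)) ∧ sm = x t₀ (i₀ + (m : Fin n))) ∧
      (x t₀ (i₀ + (m : Fin n)) = 0 →
        (∀ t ∈ Ioo t₀ (t₀ + ε),
          0 < cyclicDelta n (i₀ + (m : Fin n)) * x t (i₀ + (m : Fin n)) * x t (i₀ + (m : Fin n) - 1)) ∧
        (∀ t ∈ Ioo (t₀ - ε) t₀,
          cyclicDelta n (i₀ + (m : Fin n)) * x t (i₀ + (m : Fin n)) * x t (i₀ + (m : Fin n) - 1) < 0)) := by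
    intro m
    induction m with
    | zero =>
      simp only [Nat.cast_zero, add_zero]
      obtain ⟨ε, hε, hb⟩ := cont_step i₀ hi₀
      refine ⟨ε, hε, x t₀ i₀, x t₀ i₀, hi₀, hi₀, ?_, ?_, fun _ => ⟨rfl, rfl⟩, fun h => absurd h hi₀⟩
      · intro t ht; exact hb t (by rw [abs_of_pos (by linarith [ht.1])]; linarith [ht.2])
      · intro t ht; exact hb t (by rw [abs_of_neg (by linarith [ht.2])]; linarith [ht.1])
    | succ m ih =>
      set j := i₀ + ((m + 1 : ℕ) : Fin n) with hj
      have hpred : j - 1 = i₀ + (m : Fin n) := by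
        rw [hj]; push_cast; ring
      by_cases hxj : x t₀ j = 0
      · obtain ⟨ε', hε', sp', sm', hsp', hsm', hrt, hlt, _, _⟩ := ih
        have hδ : cyclicDelta n j ≠ 0 := by
          unfold cyclicDelta; split <;> norm_num
        -- right side
        have hrt' : ∀ t ∈ Ioo t₀ (t₀ + ε'), 0 < sp' * x t (j - 1) := by
          intro t ht; rw [hpred]; exact hrt t ht
        have hRight := (component_sign S x hsol j t₀ hxj sp' t₀ (t₀ + ε') hrt').1 rfl
        -- left side
        have hlt' : ∀ t ∈ Ioo (t₀ - ε') t₀, 0 < sm' * x t (j - 1) := by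
          intro t ht; rw [hpred]; exact hlt t ht
        have hLeft := (component_sign S x hsol j t₀ hxj sm' (t₀ - ε') t₀ hlt').2 rfl
        refine ⟨ε', hε', cyclicDelta n j * sp', -(cyclicDelta n j * sm'),
          mul_ne_zero hδ hsp', neg_ne_zero.mpr (mul_ne_zero hδ hsm'), hRight, ?_,
          fun h => absurd hxj h, fun _ => ⟨?_, ?_⟩⟩
        · intro t ht
          have := hLeft t ht
          nlinarith
        · intro t ht
          have h1 := hRight t ht
          have h2 := hrt' t ht
          apply pos_cancel_sq hsp' (c := sp')
          nlinarith [h1, h2]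
        · intro t ht
          have h1 := hLeft t ht
          have h2 := hlt' t ht
          have : 0 < -(cyclicDelta n j * x t j * x t (j - 1)) := by
            apply pos_cancel_sq hsm' (c := sm')
            nlinarith [h1, h2]
          linarith
      · obtain ⟨ε, hε, hb⟩ := cont_step j hxj
        refine ⟨ε, hε, x t₀ j, x t₀ j, hxj, hxj, ?_, ?_, fun _ => ⟨rfl, rfl⟩,
          fun h => absurd h hxj⟩
        · intro t ht; exact hb t (by rw [abs_of_pos (by linarith [ht.1])]; linarith [ht.2])
        · intro t ht; exact hb t (by rw [abs_of_neg (by linarith [ht.2])]; linarith [ht.1])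
  -- repackage per index i
  have key' : ∀ i : Fin n, ∃ ε > 0,
      (∀ t ∈ Ioo t₀ (t₀ + ε), x t i ≠ 0 ∧
        (x t₀ i ≠ 0 → 0 < x t₀ i * x t i) ∧
        (x t₀ i = 0 → 0 < cyclicDelta n i * x t i * x t (i - 1))) ∧
      (∀ t ∈ Ioo (t₀ - ε) t₀, x t i ≠ 0 ∧
        (x t₀ i ≠ 0 → 0 < x t₀ i * x t i) ∧
        (x t₀ i = 0 → cyclicDelta n i * x t i * x t (i - 1) < 0)) := by
    intro i
    obtain ⟨ε, hε, sp, sm, hsp, hsm, hrt, hlt, hnz, hzero⟩ := key ((i - i₀ : Fin n)).val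
    have hidx : i₀ + (((i - i₀ : Fin n)).val : Fin n) = i := by
      rw [Fin.cast_val_eq_self, add_sub_cancel]
    rw [hidx] at hrt hlt hnz hzero
    refine ⟨ε, hε, ?_, ?_⟩
    · intro t ht
      refine ⟨ne_zero_of_mul_pos (hrt t ht), fun h0 => ?_, fun h0 => (hzero h0).1 t ht⟩
      have := (hnz h0).1
      subst this
      exact hrt t ht
    · intro t ht
      refine ⟨ne_zero_of_mul_pos (hlt t ht), fun h0 => ?_, fun h0 => (hzero h0).2 t ht⟩
      have := (hnz h0).2
      subst this
      exact hlt t ht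
  choose ε hε hR hL using key'
  have hne : (Finset.univ : Finset (Fin n)).Nonempty := ⟨i₀, Finset.mem_univ _⟩
  set εm := Finset.univ.inf' hne ε with hεm
  have hεmpos : 0 < εm := by
    rw [hεm, Finset.lt_inf'_iff]
    exact fun i _ => hε i
  have hεmle : ∀ i, εm ≤ ε i := fun i => Finset.inf'_le _ (Finset.mem_univ i)
  refine ⟨εm, hεmpos, ?_, ?_⟩
  · intro t ht i
    exact hR i t ⟨ht.1, lt_of_lt_of_le ht.2 (by linarith [hεmle i])⟩
  · intro t ht i
    exact hL i t ⟨lt_of_le_of_lt (by linarith [hεmle i]) ht.1, ht.2⟩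


include hsol in
lemma never_zero (hnontriv : ¬ ∀ t, x t = 0) : ∀ t, x t ≠ 0 := by
  by_contra hcon
  push_neg at hcon
  obtain ⟨t₁, ht₁⟩ := hcon
  apply hnontriv
  intro τ
  -- set up interval
  set a := min τ t₁ - 1 with ha
  set b := max τ t₁ + 1 with hb
  have hab : a < b := by
    have h1 : min τ t₁ ≤ max τ t₁ := le_trans (min_le_left _ _) (le_max_left _ _)
    rw [ha, hb]; linarith
  have ht₁m : t₁ ∈ Ioo a b := by
    constructor
    · rw [ha]; have := min_le_right τ t₁; linarith
    · rw [hb]; have := le_max_right τ t₁; linarith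
  have hτm : τ ∈ Icc a b := by
    constructor
    · rw [ha]; have := min_le_left τ t₁; linarith
    · rw [hb]; have := le_max_left τ t₁; linarith
  set cl : ℝ → ℝ := fun t => max a (min b t) with hcl
  have hclmem : ∀ t, cl t ∈ Icc a b := by
    intro t
    exact ⟨le_max_left _ _, max_le hab.le (min_le_left _ _)⟩
  have hcleq : ∀ t ∈ Icc a b, cl t = t := by
    intro t ht
    rw [hcl]
    simp only
    rw [min_eq_right ht.2, max_eq_right ht.1]
  -- bound on coefficients
  have hbound : ∃ C : ℝ, 0 ≤ C ∧ ∀ (u : ℝ), u ∈ Icc a b → ∀ i : Fin n,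
      |S.diag u i| + |S.sub u i| ≤ C := by
    have hC : ∀ i : Fin n, ∃ C : ℝ, ∀ u ∈ Icc a b, |S.diag u i| + |S.sub u i| ≤ C := by
      intro i
      obtain ⟨C, hC⟩ := (isCompact_Icc (a := a) (b := b)).exists_bound_of_continuousOn
        (((S.cont_diag i).abs.add (S.cont_sub i).abs).continuousOn)
      exact ⟨C, fun u hu => le_trans (le_abs_self _) (hC u hu)⟩
    choose C hC using hC
    have hne : (Finset.univ : Finset (Fin n)).Nonempty :=
      ⟨0, Finset.mem_univ _⟩
    refine ⟨max 0 (Finset.univ.sup' hne C), le_max_left _ _, fun u hu i => ?_⟩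
    exact le_trans (hC i u hu) (le_trans (Finset.le_sup' C (Finset.mem_univ i)) (le_max_right _ _))
  obtain ⟨C, hC0, hCb⟩ := hbound
  -- the clamped vector field
  set v : ℝ → (Fin n → ℝ) → (Fin n → ℝ) :=
    fun t y i => S.diag (cl t) i * y i + S.sub (cl t) i * y (i - 1) with hv
  have hlip : ∀ t, LipschitzWith (2 * C.toNNReal) (v t) := by
    intro t
    apply LipschitzWith.of_dist_le_mul
    intro y z
    have hcoe : ((2 * C.toNNReal : ℝ≥0) : ℝ) = 2 * C := by
      push_cast
      rw [Real.coe_toNNReal _ hC0]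
    rw [hcoe]
    have hd0 : 0 ≤ 2 * C * dist y z := by positivity
    rw [dist_pi_le_iff hd0]
    intro i
    have h1 : dist (y i) (z i) ≤ dist y z := dist_le_pi_dist y z i
    have h2 : dist (y (i - 1)) (z (i - 1)) ≤ dist y z := dist_le_pi_dist y z (i - 1)
    have hci := hCb (cl t) (hclmem t) i
    rw [Real.dist_eq] at h1 h2 ⊢
    have heq : v t y i - v t z i
        = S.diag (cl t) i * (y i - z i) + S.sub (cl t) i * (y (i - 1) - z (i - 1)) := by
      rw [hv]; ring
    rw [heq]
    calc |S.diag (cl t) i * (y i - z i) + S.sub (cl t) i * (y (i - 1) - z (i - 1))|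
        ≤ |S.diag (cl t) i * (y i - z i)| + |S.sub (cl t) i * (y (i - 1) - z (i - 1))| :=
          abs_add_le _ _
      _ = |S.diag (cl t) i| * |y i - z i| + |S.sub (cl t) i| * |y (i - 1) - z (i - 1)| := by
          rw [abs_mul, abs_mul]
      _ ≤ |S.diag (cl t) i| * dist y z + |S.sub (cl t) i| * dist y z := by
          exact add_le_add (mul_le_mul_of_nonneg_left h1 (abs_nonneg _))
            (mul_le_mul_of_nonneg_left h2 (abs_nonneg _))
      _ = (|S.diag (cl t) i| + |S.sub (cl t) i|) * dist y z := by ring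
      _ ≤ 2 * C * dist y z := by
          have hdnn : (0:ℝ) ≤ dist y z := dist_nonneg
          nlinarith [abs_nonneg (S.diag (cl t) i), abs_nonneg (S.sub (cl t) i)]
  -- apply uniqueness
  have heq : EqOn x (fun _ : ℝ => (0 : Fin n → ℝ)) (Icc a b) := by
    apply ODE_solution_unique_of_mem_Icc (v := v) (s := fun _ => Set.univ)
      (fun t _ => (hlip t).lipschitzOnWith) ht₁m
    · intro t ht
      exact ContinuousAt.continuousWithinAt (by
        have : ∀ i, ContinuousAt (fun s => x s i) t := fun i => (hsol t i).continuousAt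
        exact continuousAt_pi.mpr this)
    · intro t ht
      rw [hasDerivAt_pi]
      intro i
      have := hsol t i
      have hcc : cl t = t := hcleq t (Ioo_subset_Icc_self ht)
      rw [hv]
      simp only [hcc]
      exact this
    · intro t _; trivial
    · exact continuousOn_const
    · intro t ht
      have h0 : v t (0 : Fin n → ℝ) = 0 := by
        funext i
        rw [hv]; simp
      show HasDerivAt (fun _ : ℝ => (0 : Fin n → ℝ)) (v t 0) t
      rw [h0]
      exact hasDerivAt_const _ _
    · intro t _; trivial
    · exact ht₁
  exact heq hτm


include hsol in
lemma key_point (hn : 2 ≤ n) (hnz : ∀ t, x t ≠ 0) (t₀ : ℝ) :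
    ∃ ε > 0,
      (∀ t ∈ Ioo t₀ (t₀ + ε), x t ∈ cyclicLambda n ∧ cyclicN n (x t) = cyclicNm n (x t₀)) ∧
      (∀ t ∈ Ioo (t₀ - ε) t₀, x t ∈ cyclicLambda n ∧ cyclicN n (x t) = cyclicNM n (x t₀)) ∧
      cyclicNm n (x t₀) ≤ cyclicNM n (x t₀) := by
  classical
  obtain ⟨i₀, hi₀⟩ : ∃ i, x t₀ i ≠ 0 := by
    by_contra h
    push_neg at h
    exact hnz t₀ (funext h)
  obtain ⟨ε, hε, hR, hL⟩ := local_structure S x hsol t₀ i₀ hi₀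
  have hδ' : ∀ i, -(cyclicDelta n i) = 1 ∨ -(cyclicDelta n i) = -1 := by
    intro i
    rcases delta_cases n i with h | h
    · exact Or.inr (by rw [h])
    · exact Or.inl (by rw [h]; ring)
  -- constancy of N on the right interval
  have hconstR : ∀ t ∈ Ioo t₀ (t₀ + ε), ∀ t' ∈ Ioo t₀ (t₀ + ε),
      cyclicN n (x t) ≤ cyclicN n (x t') := by
    intro t ht t' ht'
    rw [cyclicN_eq, cyclicN_eq]
    apply comb n hn (cyclicDelta n) (x t₀) (delta_cases n) i₀ hi₀ _ (x t') (x t)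
      (fun i => (hR t ht i).1) (fun i => (hR t' ht' i).1) ?_
      (fun i h0 => (hR t ht i).2.2 h0) rfl
    intro i h0
    have h1 := (hR t ht i).2.1 h0
    have h2 := (hR t' ht' i).2.1 h0
    rw [mul_comm] at h1 h2
    exact mul_pos_trans h1 h2
  -- constancy of N on the left interval
  have hconstL : ∀ t ∈ Ioo (t₀ - ε) t₀, ∀ t' ∈ Ioo (t₀ - ε) t₀,
      cyclicN n (x t') ≤ cyclicN n (x t) := by
    intro t ht t' ht'
    have hkey : (Finset.univ.filter
          fun i => (-(cyclicDelta n i)) * x t i * x t (i - 1) < 0).card ≤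
        (Finset.univ.filter fun i => (-(cyclicDelta n i)) * x t' i * x t' (i - 1) < 0).card := by
      apply comb n hn (fun i => -(cyclicDelta n i)) (x t₀) hδ' i₀ hi₀ _ (x t') (x t)
        (fun i => (hL t ht i).1) (fun i => (hL t' ht' i).1) ?_ ?_ rfl
      · intro i h0
        have h1 := (hL t ht i).2.1 h0
        have h2 := (hL t' ht' i).2.1 h0
        rw [mul_comm] at h1 h2
        exact mul_pos_trans h1 h2
      · intro i h0
        have := (hL t ht i).2.2 h0
        have hkey2 : (-(cyclicDelta n i)) * x t i * x t (i - 1)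
            = -(cyclicDelta n i * x t i * x t (i - 1)) := by ring
        rw [hkey2]
        linarith
    rw [card_neg_delta n (x t) (fun i => (hL t ht i).1),
      card_neg_delta n (x t') (fun i => (hL t' ht' i).1)] at hkey
    have b1 : cyclicN n (x t) ≤ n := cyclicN_le n _
    have b2 : cyclicN n (x t') ≤ n := cyclicN_le n _
    rw [← cyclicN_eq, ← cyclicN_eq] at hkey
    omega
  set tp := t₀ + ε / 2 with htpdef
  set tm := t₀ - ε / 2 with htmdef
  have htp : tp ∈ Ioo t₀ (t₀ + ε) := ⟨by rw [htpdef]; linarith, by rw [htpdef]; linarith⟩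
  have htm : tm ∈ Ioo (t₀ - ε) t₀ := ⟨by rw [htmdef]; linarith, by rw [htmdef]; linarith⟩
  set cp := cyclicN n (x tp) with hcp
  set cm := cyclicN n (x tm) with hcm
  have hxc : ContinuousAt x t₀ := continuousAt_pi.mpr (fun i => (hsol t₀ i).continuousAt)
  set Sset := {k | ∃ᶠ y in 𝓝[cyclicLambda n] (x t₀), cyclicN n y = k} with hSset
  -- membership of cp
  have hmemR : cp ∈ Sset := by
    have htend : Tendsto x (𝓝[>] t₀) (𝓝[cyclicLambda n] (x t₀)) := by
      rw [tendsto_nhdsWithin_iff]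
      constructor
      · exact hxc.tendsto.mono_left nhdsWithin_le_nhds
      · filter_upwards [Ioo_mem_nhdsGT (by linarith : t₀ < t₀ + ε)] with t ht
        exact fun i => (hR t ht i).1
    have hev : ∀ᶠ t in 𝓝[>] t₀, cyclicN n (x t) = cp := by
      filter_upwards [Ioo_mem_nhdsGT (by linarith : t₀ < t₀ + ε)] with t ht
      exact le_antisymm (hconstR t ht tp htp) (hconstR tp htp t ht)
    exact htend.frequently hev.frequently
  have hmemL : cm ∈ Sset := by
    have htend : Tendsto x (𝓝[<] t₀) (𝓝[cyclicLambda n] (x t₀)) := by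
      rw [tendsto_nhdsWithin_iff]
      constructor
      · exact hxc.tendsto.mono_left nhdsWithin_le_nhds
      · filter_upwards [Ioo_mem_nhdsLT (by linarith : t₀ - ε < t₀)] with t ht
        exact fun i => (hL t ht i).1
    have hev : ∀ᶠ t in 𝓝[<] t₀, cyclicN n (x t) = cm := by
      filter_upwards [Ioo_mem_nhdsLT (by linarith : t₀ - ε < t₀)] with t ht
      exact le_antisymm (hconstL tm htm t ht) (hconstL t ht tm htm)
    exact htend.frequently hev.frequently
  -- agreement of nearby Λ points with x t₀
  have hevAgree : ∀ᶠ y in 𝓝[cyclicLambda n] (x t₀), ∀ i, x t₀ i ≠ 0 → 0 < y i * x t₀ i :=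
    (lambda_eventually_agree n (x t₀)).filter_mono nhdsWithin_le_nhds
  -- lower bound for the right value
  have hlbR : ∀ k ∈ Sset, cp ≤ k := by
    intro k hk
    obtain ⟨y, hNy, hagree, hyΛ⟩ :=
      (hk.and_eventually (hevAgree.and (eventually_mem_nhdsWithin))).exists
    rw [← hNy, hcp, cyclicN_eq, cyclicN_eq]
    apply comb n hn (cyclicDelta n) (x t₀) (delta_cases n) i₀ hi₀ _ y (x tp)
      (fun i => (hR tp htp i).1) hyΛ ?_ (fun i h0 => (hR tp htp i).2.2 h0) rfl
    intro i h0
    have h1 := (hR tp htp i).2.1 h0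
    have h2 := hagree i h0
    rw [mul_comm] at h1
    exact mul_pos_trans h1 h2
  -- upper bound for the left value
  have hubL : ∀ k ∈ Sset, k ≤ cm := by
    intro k hk
    obtain ⟨y, hNy, hagree, hyΛ⟩ :=
      (hk.and_eventually (hevAgree.and (eventually_mem_nhdsWithin))).exists
    have hkey : (Finset.univ.filter
          fun i => (-(cyclicDelta n i)) * x tm i * x tm (i - 1) < 0).card ≤
        (Finset.univ.filter fun i => (-(cyclicDelta n i)) * y i * y (i - 1) < 0).card := by
      apply comb n hn (fun i => -(cyclicDelta n i)) (x t₀) hδ' i₀ hi₀ _ y (x tm)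
        (fun i => (hL tm htm i).1) hyΛ ?_ ?_ rfl
      · intro i h0
        have h1 := (hL tm htm i).2.1 h0
        have h2 := hagree i h0
        rw [mul_comm] at h1
        exact mul_pos_trans h1 h2
      · intro i h0
        have := (hL tm htm i).2.2 h0
        have hkey2 : (-(cyclicDelta n i)) * x tm i * x tm (i - 1)
            = -(cyclicDelta n i * x tm i * x tm (i - 1)) := by ring
        rw [hkey2]
        linarith
    rw [card_neg_delta n (x tm) (fun i => (hL tm htm i).1),
      card_neg_delta n y hyΛ] at hkey
    have b1 : cyclicN n y ≤ n := cyclicN_le n _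
    have b2 : cm ≤ n := cyclicN_le n _
    rw [← cyclicN_eq, ← cyclicN_eq] at hkey
    omega
  have hNm : cyclicNm n (x t₀) = cp :=
    le_antisymm (Nat.sInf_le hmemR) (le_csInf ⟨cp, hmemR⟩ hlbR)
  have hNM : cyclicNM n (x t₀) = cm :=
    le_antisymm (csSup_le ⟨cm, hmemL⟩ hubL) (le_csSup ⟨cm, hubL⟩ hmemL)
  refine ⟨ε, hε, ?_, ?_, ?_⟩
  · intro t ht
    refine ⟨fun i => (hR t ht i).1, ?_⟩
    rw [hNm]
    exact le_antisymm (hconstR t ht tp htp) (hconstR tp htp t ht)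
  · intro t ht
    refine ⟨fun i => (hL t ht i).1, ?_⟩
    rw [hNM]
    exact le_antisymm (hconstL tm htm t ht) (hconstL t ht tm htm)
  · rw [hNm, hNM]
    exact hubL cp hmemR

end main

end aux


/-- A nontrivial periodic solution of the linear cyclic
negative feedback system lies in `𝒩` for all times and `N` is constant along it. -/
theorem stmt19 (n : ℕ) [NeZero n] (hn : 2 ≤ n) (S : LinCNF n) (x : ℝ → Fin n → ℝ)
    (hsol : S.IsSolution x) (hnontriv : ¬ ∀ t, x t = 0)
    (ω : ℝ) (hω : 0 < ω) (hper : ∀ t, x (t + ω) = x t) :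
    (∀ t : ℝ, x t ∈ cyclicGood n) ∧
    (∀ s t : ℝ, cyclicNm n (x s) = cyclicNm n (x t)) := by
  have hnz : ∀ t, x t ≠ 0 := never_zero S x hsol hnontriv
  set f : ℝ → ℕ := fun t => cyclicNm n (x t) with hf
  have hloc : ∀ t₀ : ℝ, ∃ ε > 0,
      (∀ t ∈ Ioo t₀ (t₀ + ε), f t = f t₀) ∧
      (∀ t ∈ Ioo (t₀ - ε) t₀, f t = cyclicNM n (x t₀)) ∧
      f t₀ ≤ cyclicNM n (x t₀) := by
    intro t₀
    obtain ⟨ε, hε, hRight, hLeft, hle⟩ := key_point S x hsol hn hnz t₀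
    refine ⟨ε, hε, ?_, ?_, hle⟩
    · intro t ht
      obtain ⟨hΛ, hNt⟩ := hRight t ht
      show cyclicNm n (x t) = cyclicNm n (x t₀)
      rw [(good_on_lambda n hΛ).1, hNt]
    · intro t ht
      obtain ⟨hΛ, hNt⟩ := hLeft t ht
      show cyclicNm n (x t) = cyclicNM n (x t₀)
      rw [(good_on_lambda n hΛ).1, hNt]
  -- f is nonincreasing
  have hmono : ∀ a b : ℝ, a ≤ b → f b ≤ f a := by
    intro a b hab
    set A := {t : ℝ | t ∈ Icc a b ∧ ∀ u ∈ Icc a t, f u ≤ f a} with hA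
    have haA : a ∈ A := ⟨⟨le_refl a, hab⟩, fun u hu => by rw [le_antisymm hu.2 hu.1]⟩
    have hbdd : BddAbove A := ⟨b, fun t ht => ht.1.2⟩
    have hAne : A.Nonempty := ⟨a, haA⟩
    set c := sSup A with hc
    have hac : a ≤ c := le_csSup hbdd haA
    have hcb : c ≤ b := csSup_le hAne (fun t ht => ht.1.2)
    have hcA : ∀ u ∈ Icc a c, f u ≤ f a := by
      intro u hu
      rcases eq_or_lt_of_le hu.2 with heq | hu2
      · -- u = c
        rcases eq_or_lt_of_le hac with hrfl | hacs
        · rw [heq, ← hrfl]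
        · obtain ⟨ε, hε, _, hLt, hle⟩ := hloc c
          set w := max a (c - min ε (c - a) / 2) with hw
          have hεa : 0 < min ε (c - a) := lt_min hε (by linarith)
          have hwc : w < c := by
            apply max_lt hacs
            have : min ε (c - a) ≤ c - a := min_le_right _ _
            linarith
          have hwin : w ∈ Ioo (c - ε) c := by
            constructor
            · have h1 : c - min ε (c - a) / 2 ≤ w := le_max_right _ _
              have h2 : min ε (c - a) ≤ ε := min_le_left _ _
              linarith
            · exact hwc
          have hfw : f w = cyclicNM n (x c) := hLt w hwin
          have hfcw : f c ≤ f w := by rw [hfw]; exact hle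
          obtain ⟨t', ht'A, hwt'⟩ := exists_lt_of_lt_csSup hAne hwc
          have hfwa : f w ≤ f a := ht'A.2 w ⟨le_max_left _ _, hwt'.le⟩
          rw [heq]
          exact le_trans hfcw hfwa
      · obtain ⟨t', ht'A, hut⟩ := exists_lt_of_lt_csSup hAne hu2
        exact ht'A.2 u ⟨hu.1, hut.le⟩
    have hceq : c = b := by
      by_contra hne
      have hcb' : c < b := lt_of_le_of_ne hcb hne
      obtain ⟨ε, hε, hRt, _, _⟩ := hloc c
      set c' := min b (c + ε / 2) with hc'
      have hcc' : c < c' := lt_min hcb' (by linarith)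
      have hc'A : c' ∈ A := by
        refine ⟨⟨by linarith, min_le_left _ _⟩, ?_⟩
        intro u hu
        rcases le_or_gt u c with h | h
        · exact hcA u ⟨hu.1, h⟩
        · have hu2 : u ∈ Ioo c (c + ε) := by
            refine ⟨h, ?_⟩
            have h1 : u ≤ c' := hu.2
            have h2 : c' ≤ c + ε / 2 := min_le_right _ _
            linarith
          rw [hRt u hu2]
          exact hcA c ⟨hac, le_refl c⟩
      have := le_csSup hbdd hc'A
      rw [← hc] at this
      linarith
    rw [hceq] at hcA
    exact hcA b ⟨hab, le_refl b⟩
  -- periodicity of f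
  have hfper : ∀ (s : ℝ) (k : ℕ), f (s + k * ω) = f s := by
    intro s k
    induction k with
    | zero => simp
    | succ k ih =>
      have harr : s + (k + 1 : ℕ) * ω = (s + k * ω) + ω := by push_cast; ring
      rw [harr]
      have : x ((s + k * ω) + ω) = x (s + k * ω) := hper _
      show cyclicNm n (x ((s + k * ω) + ω)) = f s
      rw [this]
      exact ih
  -- f is constant
  have hconst : ∀ s t : ℝ, f s = f t := by
    have hkey : ∀ s t : ℝ, s ≤ t → f s = f t := by
      intro s t hst
      refine le_antisymm ?_ (hmono s t hst)
      obtain ⟨k, hk⟩ := exists_nat_ge ((t - s) / ω)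
      have hk' : t ≤ s + k * ω := by
        have := (div_le_iff₀ hω).mp hk
        linarith
      calc f s = f (s + k * ω) := (hfper s k).symm
        _ ≤ f t := hmono t (s + k * ω) hk'
    intro s t
    rcases le_total s t with h | h
    · exact hkey s t h
    · exact (hkey t s h).symm
  constructor
  · intro t₀
    obtain ⟨ε, hε, _, hLt, _⟩ := hloc t₀
    have hw : t₀ - ε / 2 ∈ Ioo (t₀ - ε) t₀ := ⟨by linarith, by linarith⟩
    have h1 : f (t₀ - ε / 2) = cyclicNM n (x t₀) := hLt _ hw
    have h2 : f (t₀ - ε / 2) = f t₀ := hconst _ _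
    show cyclicNm n (x t₀) = cyclicNM n (x t₀)
    rw [← h1]
    exact h2.symm
  · exact hconst
end
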